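/- arXiv:1909.08988 — 4 statements merged into one kernel-verified Lean document; each statement's English description precedes it below -/
import Mathlib

section
/- Let E be a compact subset of ℝ^d equipped with Lebesgue measure, let π : E → ℝ be a continuous positive probability density, let Θ : E×E → (0,∞) be a continuous kernel, let h be an acceptance function, and set α(x,y) = Θ(x|y)π(y)/(Θ(y|x)π(x)). Then for every continuous positive probability density g on E and every continuous φ : E → ℝ, one has the rewriting identity ∬_{E×E} g(x)·Θ(y|x)·h(α(x,y))·(φ(y) − φ(x)) dx dy = ∬_{E×E} π(x)·Θ(y|x)·h(α(x,y))·φ(x)·(g(y)/π(y) − g(x)/π(x)) dx dy. -/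
open MeasureTheory Set

open Function in
theorem aux_stmt3 {d : ℕ} (E : Set (EuclideanSpace ℝ (Fin d))) (hE : IsCompact E)
    (F : EuclideanSpace ℝ (Fin d) → EuclideanSpace ℝ (Fin d) → ℝ)
    (hFc : ContinuousOn (fun p : EuclideanSpace ℝ (Fin d) × EuclideanSpace ℝ (Fin d) =>
      F p.1 p.2) (E ×ˢ E))
    (π g φ : EuclideanSpace ℝ (Fin d) → ℝ)
    (hπc : ContinuousOn π E) (hgc : ContinuousOn g E) (hφ : ContinuousOn φ E)
    (hπpos : ∀ x ∈ E, π x ≠ 0)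
    (hdb : ∀ x ∈ E, ∀ y ∈ E, π x * F x y = π y * F y x) :
    ∫ x in E, ∫ y in E, g x * F x y * (φ y - φ x)
      = ∫ x in E, ∫ y in E, π x * F x y * φ x * (g y / π y - g x / π x) := by
  have hEm : MeasurableSet E := hE.measurableSet
  have hEE : IsCompact (E ×ˢ E) := hE.prod hE
  -- continuity helpers
  have hgc1 : ContinuousOn (fun p : _ × _ => g p.1) (E ×ˢ E) :=
    hgc.comp continuous_fst.continuousOn fun p hp => hp.1
  have hgc2 : ContinuousOn (fun p : _ × _ => g p.2) (E ×ˢ E) :=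
    hgc.comp continuous_snd.continuousOn fun p hp => hp.2
  have hφ1 : ContinuousOn (fun p : _ × _ => φ p.1) (E ×ˢ E) :=
    hφ.comp continuous_fst.continuousOn fun p hp => hp.1
  have hφ2 : ContinuousOn (fun p : _ × _ => φ p.2) (E ×ˢ E) :=
    hφ.comp continuous_snd.continuousOn fun p hp => hp.2
  have hFswap : ContinuousOn (fun p : _ × _ => F p.2 p.1) (E ×ˢ E) :=
    hFc.comp continuous_swap.continuousOn fun p hp => ⟨hp.2, hp.1⟩
  -- integrability of uncurried continuous functions on the product of restricted measures
  have hint : ∀ (k : EuclideanSpace ℝ (Fin d) → EuclideanSpace ℝ (Fin d) → ℝ),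
      ContinuousOn (fun p : _ × _ => k p.1 p.2) (E ×ˢ E) →
      Integrable (uncurry k) ((volume.restrict E).prod (volume.restrict E)) := by
    intro k hk
    rw [Measure.prod_restrict, ← Measure.volume_eq_prod]
    exact hk.integrableOn_compact hEE
  have h1 := hint (fun x y => g x * F x y * φ y) ((hgc1.mul hFc).mul hφ2)
  have h2 := hint (fun x y => g x * F x y * φ x) ((hgc1.mul hFc).mul hφ1)
  have h3 := hint (fun x y => φ x * g y * F y x) ((hφ1.mul hgc2).mul hFswap)
  have h1' : Integrable (fun x => ∫ y in E, g x * F x y * φ y) (volume.restrict E) :=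
    h1.integral_prod_left
  have h2' : Integrable (fun x => ∫ y in E, g x * F x y * φ x) (volume.restrict E) :=
    h2.integral_prod_left
  have h3' : Integrable (fun x => ∫ y in E, φ x * g y * F y x) (volume.restrict E) :=
    h3.integral_prod_left
  -- inner integrability for fixed x ∈ E
  have hinner : ∀ (k : EuclideanSpace ℝ (Fin d) → EuclideanSpace ℝ (Fin d) → ℝ),
      ContinuousOn (fun p : _ × _ => k p.1 p.2) (E ×ˢ E) →
      ∀ x ∈ E, IntegrableOn (fun y => k x y) E := by
    intro k hk x hx
    have : ContinuousOn (fun y => k x y) E :=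
      hk.comp (continuous_const.prodMk continuous_id).continuousOn fun y hy => ⟨hx, hy⟩
    exact this.integrableOn_compact hE
  have L : (∫ x in E, ∫ y in E, g x * F x y * (φ y - φ x))
      = (∫ x in E, ∫ y in E, g x * F x y * φ y)
        - ∫ x in E, ∫ y in E, g x * F x y * φ x := by
    rw [← integral_sub h1' h2']
    refine setIntegral_congr_fun hEm fun x hx => ?_
    have ia : IntegrableOn (fun y => g x * F x y * φ y) E :=
      hinner (fun x y => g x * F x y * φ y) ((hgc1.mul hFc).mul hφ2) x hx
    have ib : IntegrableOn (fun y => g x * F x y * φ x) E :=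
      hinner (fun x y => g x * F x y * φ x) ((hgc1.mul hFc).mul hφ1) x hx
    rw [← integral_sub ia ib]
    refine setIntegral_congr_fun hEm fun y hy => ?_
    ring
  have R : (∫ x in E, ∫ y in E, π x * F x y * φ x * (g y / π y - g x / π x))
      = (∫ x in E, ∫ y in E, φ x * g y * F y x)
        - ∫ x in E, ∫ y in E, g x * F x y * φ x := by
    rw [← integral_sub h3' h2']
    refine setIntegral_congr_fun hEm fun x hx => ?_
    have ia : IntegrableOn (fun y => φ x * g y * F y x) E :=
      hinner (fun x y => φ x * g y * F y x) ((hφ1.mul hgc2).mul hFswap) x hx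
    have ib : IntegrableOn (fun y => g x * F x y * φ x) E :=
      hinner (fun x y => g x * F x y * φ x) ((hgc1.mul hFc).mul hφ1) x hx
    rw [← integral_sub ia ib]
    refine setIntegral_congr_fun hEm fun y hy => ?_
    have hdbxy := hdb x hx y hy
    have hFyx : F y x = π x * F x y / π y := by
      rw [eq_div_iff (hπpos y hy)]; linarith
    rw [hFyx]
    field_simp [hπpos x hx, hπpos y hy]
  rw [L, R]
  congr 1
  rw [integral_integral_swap h1]
  refine setIntegral_congr_fun hEm fun x hx => ?_
  refine setIntegral_congr_fun hEm fun y hy => ?_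
  ring

/-- On compact `E ⊆ ℝ^d` with Lebesgue measure, for a continuous
positive probability density `π`, a continuous positive kernel `Θ` (`Θ x y` denotes
`Θ(y|x)`), an acceptance function `h`, and `α(x,y) = Θ(x|y)π(y)/(Θ(y|x)π(x))`:
for every continuous positive probability density `g` and every continuous `φ`,
`∬ g(x)Θ(y|x)h(α(x,y))(φ(y)−φ(x)) dx dy
  = ∬ π(x)Θ(y|x)h(α(x,y))φ(x)(g(y)/π(y) − g(x)/π(x)) dx dy`. -/
theorem stmt_3 {d : ℕ} (E : Set (EuclideanSpace ℝ (Fin d))) (hE : IsCompact E)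
    (π : EuclideanSpace ℝ (Fin d) → ℝ)
    (hπc : ContinuousOn π E) (hπpos : ∀ x ∈ E, 0 < π x)
    (hπint : ∫ x in E, π x = 1)
    (Θ : EuclideanSpace ℝ (Fin d) → EuclideanSpace ℝ (Fin d) → ℝ)
    (hΘc : ContinuousOn (fun p : EuclideanSpace ℝ (Fin d) × EuclideanSpace ℝ (Fin d) =>
      Θ p.1 p.2) (E ×ˢ E))
    (hΘpos : ∀ x ∈ E, ∀ y ∈ E, 0 < Θ x y)
    (h : ℝ → ℝ)
    (hcont : ContinuousOn h (Set.Ici 0))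
    (hmono : MonotoneOn h (Set.Ici 0))
    (hrange : ∀ u ∈ Set.Ici (0 : ℝ), h u ∈ Set.Icc (0 : ℝ) 1)
    (hsym : ∀ u : ℝ, 0 < u → u * h (1 / u) = h u)
    (g : EuclideanSpace ℝ (Fin d) → ℝ)
    (hgc : ContinuousOn g E) (hgpos : ∀ x ∈ E, 0 < g x)
    (hgint : ∫ x in E, g x = 1)
    (φ : EuclideanSpace ℝ (Fin d) → ℝ) (hφ : ContinuousOn φ E) :
    ∫ x in E, ∫ y in E,
        g x * Θ x y * h (Θ y x * π y / (Θ x y * π x)) * (φ y - φ x)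
      = ∫ x in E, ∫ y in E,
        π x * Θ x y * h (Θ y x * π y / (Θ x y * π x)) * φ x *
          (g y / π y - g x / π x) := by
  have hEm : MeasurableSet E := hE.measurableSet
  set F : EuclideanSpace ℝ (Fin d) → EuclideanSpace ℝ (Fin d) → ℝ :=
    fun x y => Θ x y * h (Θ y x * π y / (Θ x y * π x)) with hFdef
  -- continuity of the pair map of F on E ×ˢ E
  have hΘswap : ContinuousOn (fun p : _ × _ => Θ p.2 p.1) (E ×ˢ E) :=
    hΘc.comp continuous_swap.continuousOn fun p hp => ⟨hp.2, hp.1⟩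
  have hπ1 : ContinuousOn (fun p : _ × _ => π p.1) (E ×ˢ E) :=
    hπc.comp continuous_fst.continuousOn fun p hp => hp.1
  have hπ2 : ContinuousOn (fun p : _ × _ => π p.2) (E ×ˢ E) :=
    hπc.comp continuous_snd.continuousOn fun p hp => hp.2
  have hden : ∀ p : EuclideanSpace ℝ (Fin d) × EuclideanSpace ℝ (Fin d), p ∈ E ×ˢ E →
      0 < Θ p.1 p.2 * π p.1 :=
    fun p hp => mul_pos (hΘpos p.1 hp.1 p.2 hp.2) (hπpos p.1 hp.1)
  have hnum : ∀ p : EuclideanSpace ℝ (Fin d) × EuclideanSpace ℝ (Fin d), p ∈ E ×ˢ E →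
      0 < Θ p.2 p.1 * π p.2 :=
    fun p hp => mul_pos (hΘpos p.2 hp.2 p.1 hp.1) (hπpos p.2 hp.2)
  have hrc : ContinuousOn
      (fun p : _ × _ => Θ p.2 p.1 * π p.2 / (Θ p.1 p.2 * π p.1)) (E ×ˢ E) :=
    (hΘswap.mul hπ2).div (hΘc.mul hπ1) fun p hp => (hden p hp).ne'
  have hFc : ContinuousOn (fun p : _ × _ => F p.1 p.2) (E ×ˢ E) := by
    refine hΘc.mul (hcont.comp hrc fun p hp => ?_)
    exact le_of_lt (div_pos (hnum p hp) (hden p hp))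
  -- detailed balance
  have hdb : ∀ x ∈ E, ∀ y ∈ E, π x * F x y = π y * F y x := by
    intro x hx y hy
    have ha : (0:ℝ) < Θ x y * π x := mul_pos (hΘpos x hx y hy) (hπpos x hx)
    have hb : (0:ℝ) < Θ y x * π y := mul_pos (hΘpos y hy x hx) (hπpos y hy)
    have hu : (0:ℝ) < Θ y x * π y / (Θ x y * π x) := div_pos hb ha
    have hs := hsym _ hu
    rw [one_div_div] at hs
    simp only [hFdef]
    rw [← hs]
    field_simp [(hπpos x hx).ne', (hΘpos x hx y hy).ne']
  have key := aux_stmt3 E hE F hFc π g φ hπc hgc hφ (fun x hx => (hπpos x hx).ne') hdb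
  calc ∫ x in E, ∫ y in E, g x * Θ x y * h (Θ y x * π y / (Θ x y * π x)) * (φ y - φ x)
      = ∫ x in E, ∫ y in E, g x * F x y * (φ y - φ x) := by
        refine setIntegral_congr_fun hEm fun x hx => ?_
        refine setIntegral_congr_fun hEm fun y hy => ?_
        simp only [hFdef]; ring
    _ = ∫ x in E, ∫ y in E, π x * F x y * φ x * (g y / π y - g x / π x) := key
    _ = ∫ x in E, ∫ y in E, π x * Θ x y * h (Θ y x * π y / (Θ x y * π x)) * φ x *
          (g y / π y - g x / π x) := by
        refine setIntegral_congr_fun hEm fun x hx => ?_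
        refine setIntegral_congr_fun hEm fun y hy => ?_
        simp only [hFdef]; ring
end

section
/- Let f be a solution of the nonlinear Metropolis evolution equation ∂_t f_t(x) = ∫_E π(x)·Θ_{f_t}(y|x)·h(α_{f_t}(x,y))·(f_t(y)/π(y) − f_t(x)/π(x)) dy with initial condition f₀ a continuous positive probability density on E. Then for all t ≥ 0, inf_{x∈E} f_t(x)/π(x) ≥ inf_{x∈E} f₀(x)/π(x) and sup_{x∈E} f_t(x)/π(x) ≤ sup_{x∈E} f₀(x)/π(x). -/
open MeasureTheory Set Filter Topology Asymptotics


private lemma hasDerivAt_maxsq (u : ℝ) :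
    HasDerivAt (fun v : ℝ => max v 0 ^ 2) (2 * max u 0) u := by
  rcases lt_trichotomy u 0 with hu | rfl | hu
  · have hev : (fun _ : ℝ => (0:ℝ)) =ᶠ[𝓝 u] (fun v : ℝ => max v 0 ^ 2) := by
      filter_upwards [Iio_mem_nhds hu] with v hv
      simp [max_eq_right (le_of_lt (mem_Iio.mp hv))]
    rw [max_eq_right hu.le, mul_zero]
    exact (hasDerivAt_const u (0:ℝ)).congr_of_eventuallyEq hev.symm
  · rw [max_self, mul_zero]
    rw [hasDerivAt_iff_isLittleO]
    rw [isLittleO_iff]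
    intro c hc
    filter_upwards [Metric.ball_mem_nhds (0:ℝ) hc] with v hv
    have h1 : |v| < c := by simpa [Real.dist_eq] using hv
    have h2 : max v 0 ^ 2 ≤ v ^ 2 := by
      rcases le_total v 0 with h | h
      · simp [max_eq_right h]; positivity
      · simp [max_eq_left h]
    have : ‖max v 0 ^ 2‖ ≤ v ^ 2 := by
      rw [Real.norm_eq_abs, abs_of_nonneg (by positivity)]; exact h2
    calc ‖max v 0 ^ 2 - max (0:ℝ) 0 ^ 2 - (v - 0) • (0:ℝ)‖ = ‖max v 0 ^ 2‖ := by
          simp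
      _ ≤ v ^ 2 := this
      _ = |v| * |v| := by rw [← sq_abs]; ring
      _ ≤ c * |v| := by
          apply mul_le_mul_of_nonneg_right h1.le (abs_nonneg v)
      _ = c * ‖v - 0‖ := by simp [Real.norm_eq_abs]
  · have hev : (fun v : ℝ => v ^ 2) =ᶠ[𝓝 u] (fun v : ℝ => max v 0 ^ 2) := by
      filter_upwards [Ioi_mem_nhds hu] with v hv
      simp [max_eq_left (le_of_lt (mem_Ioi.mp hv))]
    rw [max_eq_left hu.le]
    have h := hasDerivAt_pow 2 u
    simp only [Nat.cast_ofNat, pow_one] at h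
    exact (by simpa [mul_comm] using h : HasDerivAt (fun v : ℝ => v ^ 2) (2 * u) u).congr_of_eventuallyEq hev.symm

private lemma phiInf_hasDerivAt (c v : ℝ) :
    HasDerivAt (fun w : ℝ => max (c - w) 0 ^ 2) (-(2 * max (c - v) 0)) v := by
  have h1 := hasDerivAt_maxsq (c - v)
  have h2 : HasDerivAt (fun w : ℝ => c - w) (-1) v := (hasDerivAt_id v).const_sub c
  have := h1.comp v h2
  exact this.congr_deriv (by ring)

private lemma phiSup_hasDerivAt (c v : ℝ) :
    HasDerivAt (fun w : ℝ => max (w - c) 0 ^ 2) (2 * max (v - c) 0) v := by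
  have h1 := hasDerivAt_maxsq (v - c)
  have h2 : HasDerivAt (fun w : ℝ => w - c) 1 v := (hasDerivAt_id v).sub_const c
  have := h1.comp v h2
  exact this.congr_deriv (by ring)

private lemma phiInf_deriv (c : ℝ) :
    deriv (fun w : ℝ => max (c - w) 0 ^ 2) = fun v => -(2 * max (c - v) 0) :=
  funext fun v => (phiInf_hasDerivAt c v).deriv

private lemma phiSup_deriv (c : ℝ) :
    deriv (fun w : ℝ => max (w - c) 0 ^ 2) = fun v => 2 * max (v - c) 0 :=
  funext fun v => (phiSup_hasDerivAt c v).deriv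

private lemma psiInf_mono (c : ℝ) : Monotone (fun v : ℝ => -(2 * max (c - v) 0)) := by
  intro a b hab
  have : max (c - b) 0 ≤ max (c - a) 0 :=
    max_le_max (by linarith) le_rfl
  simp only [neg_le_neg_iff]
  linarith

private lemma psiSup_mono (c : ℝ) : Monotone (fun v : ℝ => 2 * max (v - c) 0) := by
  intro a b hab
  have : max (a - c) 0 ≤ max (b - c) 0 := max_le_max (by linarith) le_rfl
  simp only []
  linarith

private lemma psiInf_cont (c : ℝ) : Continuous (fun v : ℝ => -(2 * max (c - v) 0)) := by
  fun_prop

private lemma psiSup_cont (c : ℝ) : Continuous (fun v : ℝ => 2 * max (v - c) 0) := by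
  fun_prop

private lemma phiInf_contDiff (c : ℝ) : ContDiff ℝ 1 (fun w : ℝ => max (c - w) 0 ^ 2) := by
  rw [contDiff_one_iff_deriv]
  refine ⟨fun v => (phiInf_hasDerivAt c v).differentiableAt, ?_⟩
  rw [phiInf_deriv]
  fun_prop

private lemma phiSup_contDiff (c : ℝ) : ContDiff ℝ 1 (fun w : ℝ => max (w - c) 0 ^ 2) := by
  rw [contDiff_one_iff_deriv]
  refine ⟨fun v => (phiSup_hasDerivAt c v).differentiableAt, ?_⟩
  rw [phiSup_deriv]
  fun_prop

private lemma phiInf_convex (c : ℝ) : ConvexOn ℝ Set.univ (fun w : ℝ => max (c - w) 0 ^ 2) := by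
  apply Monotone.convexOn_univ_of_deriv
  · exact fun v => (phiInf_hasDerivAt c v).differentiableAt
  · rw [phiInf_deriv]; exact psiInf_mono c

private lemma phiSup_convex (c : ℝ) : ConvexOn ℝ Set.univ (fun w : ℝ => max (w - c) 0 ^ 2) := by
  apply Monotone.convexOn_univ_of_deriv
  · exact fun v => (phiSup_hasDerivAt c v).differentiableAt
  · rw [phiSup_deriv]; exact psiSup_mono c


private lemma nonpos_of_right_deriv (u u' : ℝ → ℝ) {T : ℝ} (hT : 0 ≤ T)
    (hd : ∀ s ∈ Set.Icc (0:ℝ) T, HasDerivWithinAt u (u' s) (Set.Ici 0) s)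
    (h0 : u 0 ≤ 0)
    (hneg : ∀ s ∈ Set.Icc (0:ℝ) T, 0 ≤ u s → u' s ≤ 0) :
    u T ≤ 0 := by
  rcases eq_or_lt_of_le hT with rfl | hT'
  · exact h0
  have hucont : ContinuousOn u (Set.Icc 0 T) := fun s hs =>
    ((hd s hs).continuousWithinAt).mono (Icc_subset_Ici_self)
  have hwcont : ContinuousOn (fun s => max (u s) 0) (Set.Icc 0 T) :=
    fun s hs => Filter.Tendsto.max (hucont s hs) tendsto_const_nhds
  have key : ∀ ε : ℝ, 0 < ε → max (u T) 0 ≤ ε * T := by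
    intro ε hε
    have main := le_gronwallBound_of_liminf_deriv_right_le (f := fun s => max (u s) 0)
      (f' := fun _ => 0) (δ := 0) (K := 0) (ε := ε) (a := 0) (b := T) hwcont
      ?_ (by simp [max_eq_right h0]) (fun s _ => by
        have : 0 ≤ max (u s) 0 := le_max_right _ _
        simp only [zero_mul, zero_add]
        exact hε.le) T (right_mem_Icc.2 hT)
    · simpa [gronwallBound_K0] using main
    · intro s hs r hr
      have hsIcc : s ∈ Set.Icc (0:ℝ) T := ⟨hs.1, hs.2.le⟩
      rcases lt_or_ge (u s) 0 with hus | hus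
      · -- u is negative near s, so w = 0 near s
        have hcw : ContinuousWithinAt u (Set.Ici 0) s := (hd s hsIcc).continuousWithinAt
        have htend : Tendsto u (𝓝[>] s) (𝓝 (u s)) :=
          hcw.tendsto.mono_left (nhdsWithin_mono s (fun z hz => le_trans hs.1 (le_of_lt hz)))
        have hmem : ∀ᶠ z in 𝓝[>] s, u z < 0 := htend.eventually_lt_const hus
        apply Eventually.frequently
        filter_upwards [hmem] with z hz
        rw [max_eq_right hz.le, max_eq_right hus.le]
        simpa using hr
      · have hus' : u' s ≤ 0 := hneg s hsIcc hus
        have hslope : Tendsto (slope u s) (𝓝[>] s) (𝓝 (u' s)) := by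
          have h1 := hasDerivWithinAt_iff_tendsto_slope.1 (hd s hsIcc)
          exact h1.mono_left (nhdsWithin_mono s (fun z hz =>
            ⟨le_trans hs.1 (le_of_lt hz), by simpa using ne_of_gt hz⟩))
        have hev : ∀ᶠ z in 𝓝[>] s, slope u s z < r :=
          hslope.eventually_lt_const (lt_of_le_of_lt hus' hr)
        apply Eventually.frequently
        filter_upwards [hev, self_mem_nhdsWithin] with z hsl (hz' : s < z)
        have hzs : (0:ℝ) < z - s := sub_pos.2 hz'
        have hws : max (u s) 0 = u s := max_eq_left hus
        have hwz : max (u z) 0 - max (u s) 0 ≤ max (u z - u s) 0 := by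
          rw [hws]
          rcases le_total (u z) 0 with h1 | h1
          · rw [max_eq_right h1]
            have : (0:ℝ) ≤ max (u z - u s) 0 := le_max_right _ _
            linarith
          · rw [max_eq_left h1]
            exact le_max_left _ _
        have hsl' : (z - s)⁻¹ * (u z - u s) < r := by
          rwa [slope_def_field, div_eq_inv_mul] at hsl
        calc (z - s)⁻¹ * (max (u z) 0 - max (u s) 0)
            ≤ (z - s)⁻¹ * max (u z - u s) 0 :=
              mul_le_mul_of_nonneg_left hwz (inv_nonneg.2 hzs.le)
          _ = max ((z - s)⁻¹ * (u z - u s)) ((z - s)⁻¹ * 0) :=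
              (mul_max_of_nonneg _ _ (inv_nonneg.2 hzs.le))
          _ < r := by
              rw [mul_zero]
              exact max_lt hsl' hr
  have hle : u T ≤ max (u T) 0 := le_max_left _ _
  by_contra hpos
  push_neg at hpos
  have h1 := key (u T / (2 * T)) (by positivity)
  have : u T / (2 * T) * T = u T / 2 := by field_simp
  rw [this] at h1
  have := hle.trans h1
  linarith


private lemma dissipation_nonpos {d : ℕ} {E : Set (EuclideanSpace ℝ (Fin d))}
    (hE : IsCompact E)
    (K : EuclideanSpace ℝ (Fin d) → EuclideanSpace ℝ (Fin d) → ℝ)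
    (g ψ : EuclideanSpace ℝ (Fin d) → ℝ) (ψ' : ℝ → ℝ)
    (hK : ContinuousOn (fun p : EuclideanSpace ℝ (Fin d) × EuclideanSpace ℝ (Fin d) =>
      K p.1 p.2) (E ×ˢ E))
    (hK0 : ∀ x ∈ E, ∀ y ∈ E, 0 ≤ K x y)
    (hKsym : ∀ x ∈ E, ∀ y ∈ E, K x y = K y x)
    (hg : ContinuousOn g E)
    (hψc : Continuous ψ') (hψm : Monotone ψ') (hψ : ∀ x ∈ E, ψ x = ψ' (g x)) :
    (∫ x in E, ψ x * ∫ y in E, K x y * (g y - g x)) ≤ 0 := by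
  classical
  have hEm : MeasurableSet E := hE.measurableSet
  set F : EuclideanSpace ℝ (Fin d) × EuclideanSpace ℝ (Fin d) → ℝ :=
    fun p => ψ' (g p.1) * (K p.1 p.2 * (g p.2 - g p.1)) with hFdef
  have hg1 : ContinuousOn (fun p : EuclideanSpace ℝ (Fin d) × EuclideanSpace ℝ (Fin d) =>
      g p.1) (E ×ˢ E) := hg.comp continuous_fst.continuousOn (fun p hp => hp.1)
  have hg2 : ContinuousOn (fun p : EuclideanSpace ℝ (Fin d) × EuclideanSpace ℝ (Fin d) =>
      g p.2) (E ×ˢ E) := hg.comp continuous_snd.continuousOn (fun p hp => hp.2)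
  have hFcont : ContinuousOn F (E ×ˢ E) :=
    ((hψc.comp_continuousOn hg1)).mul (hK.mul (hg2.sub hg1))
  have hGcont : ContinuousOn (F ∘ Prod.swap) (E ×ˢ E) := by
    apply hFcont.comp continuous_swap.continuousOn
    intro p hp; exact ⟨hp.2, hp.1⟩
  have hprodc : IsCompact (E ×ˢ E) := hE.prod hE
  have hFi : IntegrableOn F (E ×ˢ E) := hFcont.integrableOn_compact hprodc
  have hGi : IntegrableOn (F ∘ Prod.swap) (E ×ˢ E) := hGcont.integrableOn_compact hprodc
  -- identify the measure
  set μ : Measure (EuclideanSpace ℝ (Fin d)) := volume.restrict E with hμ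
  have hPmeas : μ.prod μ = (volume : Measure (EuclideanSpace ℝ (Fin d) ×
      EuclideanSpace ℝ (Fin d))).restrict (E ×ˢ E) := by
    rw [hμ, Measure.prod_restrict, ← Measure.volume_eq_prod]
  have hFi' : Integrable F (μ.prod μ) := by rw [hPmeas]; exact hFi
  have hGi' : Integrable (F ∘ Prod.swap) (μ.prod μ) := by rw [hPmeas]; exact hGi
  -- step 1: iterated integral equals product integral
  have step1 : (∫ x in E, ψ x * ∫ y in E, K x y * (g y - g x)) = ∫ p, F p ∂(μ.prod μ) := by
    rw [integral_prod F hFi']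
    apply setIntegral_congr_fun hEm
    intro x hx
    simp only
    rw [hψ x hx, hμ, ← integral_const_mul]
  -- step 2: swap symmetry
  have step2 : ∫ p, (F ∘ Prod.swap) p ∂(μ.prod μ) = ∫ p, F p ∂(μ.prod μ) := by
    simpa [Function.comp] using integral_prod_swap (μ := μ) (ν := μ) F
  -- step 3: sum is nonpositive
  have step3 : (∫ p, F p ∂(μ.prod μ)) + ∫ p, (F ∘ Prod.swap) p ∂(μ.prod μ) ≤ 0 := by
    rw [← integral_add hFi' hGi']
    rw [hPmeas]
    apply setIntegral_nonpos (hEm.prod hEm)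
    rintro ⟨x, y⟩ ⟨hx, hy⟩
    simp only [Function.comp]
    have hsym := hKsym x hx y hy
    have hker : 0 ≤ K x y := hK0 x hx y hy
    have hmono : 0 ≤ (ψ' (g y) - ψ' (g x)) * (g y - g x) := by
      rcases le_total (g x) (g y) with hle | hle
      · exact mul_nonneg (by simpa using sub_nonneg.2 (hψm hle)) (sub_nonneg.2 hle)
      · have h1 : ψ' (g y) - ψ' (g x) ≤ 0 := by simpa using sub_nonpos.2 (hψm hle)
        have h2 : g y - g x ≤ 0 := sub_nonpos.2 hle
        nlinarith
    have : F (x, y) + F ((x, y) : _ × _).swap =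
        -(K x y * ((ψ' (g y) - ψ' (g x)) * (g y - g x))) := by
      simp only [hFdef, Prod.swap_prod_mk]
      rw [hsym]
      ring
    rw [this]
    simp only [neg_nonpos]
    exact mul_nonneg hker hmono
  rw [step1]
  rw [step2] at step3
  linarith

/-- A continuous positive probability density on `E` (w.r.t. Lebesgue measure). -/
def IsPosDensityOn {d : ℕ} (E : Set (EuclideanSpace ℝ (Fin d)))
    (g : EuclideanSpace ℝ (Fin d) → ℝ) : Prop :=
  ContinuousOn g E ∧ (∀ x ∈ E, 0 < g x) ∧ (∫ x in E, g x) = 1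

/-- Let `f` solve the nonlinear Metropolis evolution equation
`∂_t f_t(x) = ∫_E π(x)Θ_{f_t}(y|x)h(α_{f_t}(x,y))(f_t(y)/π(y) − f_t(x)/π(x)) dy`
with initial condition `f₀` a continuous positive probability density on `E`. Then
for all `t ≥ 0`, `inf_E f_t/π ≥ inf_E f₀/π` and `sup_E f_t/π ≤ sup_E f₀/π`.
Here `Θ g x y` denotes `Θ_g(y|x)`. -/
theorem stmt_8 {d : ℕ} (E : Set (EuclideanSpace ℝ (Fin d))) (hE : IsCompact E)
    (π : EuclideanSpace ℝ (Fin d) → ℝ) (hπ : IsPosDensityOn E π)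
    (h : ℝ → ℝ)
    (hcont : ContinuousOn h (Set.Ici 0))
    (hmono : MonotoneOn h (Set.Ici 0))
    (hrange : ∀ u ∈ Set.Ici (0 : ℝ), h u ∈ Set.Icc (0 : ℝ) 1)
    (hlip : ∃ L : NNReal, LipschitzOnWith L h (Set.Ici 0))
    (hsym : ∀ u : ℝ, 0 < u → u * h (1 / u) = h u)
    (Θ : (EuclideanSpace ℝ (Fin d) → ℝ) →
      EuclideanSpace ℝ (Fin d) → EuclideanSpace ℝ (Fin d) → ℝ)
    (hΘ : ∀ g, IsPosDensityOn E g →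
      ContinuousOn (fun p : EuclideanSpace ℝ (Fin d) × EuclideanSpace ℝ (Fin d) =>
        Θ g p.1 p.2) (E ×ˢ E) ∧
      (∀ x ∈ E, ∀ y ∈ E, 0 < Θ g x y) ∧
      (∀ x ∈ E, (∫ y in E, Θ g x y) = 1))
    (f : ℝ → EuclideanSpace ℝ (Fin d) → ℝ)
    (hfc : ContinuousOn (fun p : ℝ × EuclideanSpace ℝ (Fin d) => f p.1 p.2)
      (Set.Ici 0 ×ˢ E))
    (hft : ∀ t ∈ Set.Ici (0 : ℝ), IsPosDensityOn E (f t))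
    (hderiv : ∀ t ∈ Set.Ici (0 : ℝ), ∀ x ∈ E,
      HasDerivWithinAt (fun s => f s x)
        (∫ y in E, π x * Θ (f t) x y *
          h (Θ (f t) y x * π y / (Θ (f t) x y * π x)) *
          (f t y / π y - f t x / π x)) (Set.Ici 0) t)
    (hentropy : ∀ φ : ℝ → ℝ, ConvexOn ℝ Set.univ φ → ContDiff ℝ 1 φ →
      ∀ t ∈ Set.Ici (0 : ℝ),
      HasDerivWithinAt (fun s => ∫ x in E, π x * φ (f s x / π x))
        (∫ x in E, deriv φ (f t x / π x) *
          (∫ y in E, π x * Θ (f t) x y *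
            h (Θ (f t) y x * π y / (Θ (f t) x y * π x)) *
            (f t y / π y - f t x / π x))) (Set.Ici 0) t) :
    ∀ t ∈ Set.Ici (0 : ℝ),
      sInf ((fun x => f 0 x / π x) '' E) ≤ sInf ((fun x => f t x / π x) '' E) ∧
      sSup ((fun x => f t x / π x) '' E) ≤ sSup ((fun x => f 0 x / π x) '' E) := by
  obtain ⟨hπc, hπpos, hπint⟩ := hπ
  have hEm : MeasurableSet E := hE.measurableSet
  have hEne : E.Nonempty := by
    rcases Set.eq_empty_or_nonempty E with hne | hne
    · exfalso; rw [hne] at hπint; simp at hπint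
    · exact hne
  have hgc : ∀ s ∈ Set.Ici (0:ℝ), ContinuousOn (fun x => f s x / π x) E :=
    fun s hs => ((hft s hs).1).div hπc (fun x hx => (hπpos x hx).ne')
  have h0mem : (0:ℝ) ∈ Set.Ici (0:ℝ) := Set.self_mem_Ici
  have himg : IsCompact ((fun x => f 0 x / π x) '' E) :=
    hE.image_of_continuousOn (hgc 0 h0mem)
  have hine : ((fun x => f 0 x / π x) '' E).Nonempty := hEne.image _
  set m := sInf ((fun x => f 0 x / π x) '' E) with hm
  set M := sSup ((fun x => f 0 x / π x) '' E) with hM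
  have hm_le : ∀ x ∈ E, m ≤ f 0 x / π x := fun x hx => csInf_le himg.bddBelow ⟨x, hx, rfl⟩
  have hle_M : ∀ x ∈ E, f 0 x / π x ≤ M := fun x hx => le_csSup himg.bddAbove ⟨x, hx, rfl⟩
  -- kernel facts
  have hker : ∀ s ∈ Set.Ici (0:ℝ),
      ContinuousOn (fun p : EuclideanSpace ℝ (Fin d) × EuclideanSpace ℝ (Fin d) =>
        π p.1 * Θ (f s) p.1 p.2 *
          h (Θ (f s) p.2 p.1 * π p.2 / (Θ (f s) p.1 p.2 * π p.1))) (E ×ˢ E) ∧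
      (∀ x ∈ E, ∀ y ∈ E, 0 ≤ π x * Θ (f s) x y *
          h (Θ (f s) y x * π y / (Θ (f s) x y * π x))) ∧
      (∀ x ∈ E, ∀ y ∈ E, π x * Θ (f s) x y * h (Θ (f s) y x * π y / (Θ (f s) x y * π x))
        = π y * Θ (f s) y x * h (Θ (f s) x y * π x / (Θ (f s) y x * π y))) := by
    intro s hs
    obtain ⟨hΘc, hΘpos, hΘint⟩ := hΘ (f s) (hft s hs)
    have hπ1 : ContinuousOn (fun p : EuclideanSpace ℝ (Fin d) × EuclideanSpace ℝ (Fin d) =>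
        π p.1) (E ×ˢ E) := hπc.comp continuous_fst.continuousOn (fun p hp => hp.1)
    have hπ2 : ContinuousOn (fun p : EuclideanSpace ℝ (Fin d) × EuclideanSpace ℝ (Fin d) =>
        π p.2) (E ×ˢ E) := hπc.comp continuous_snd.continuousOn (fun p hp => hp.2)
    have hΘ21 : ContinuousOn (fun p : EuclideanSpace ℝ (Fin d) × EuclideanSpace ℝ (Fin d) =>
        Θ (f s) p.2 p.1) (E ×ˢ E) :=
      hΘc.comp continuous_swap.continuousOn (fun p hp => ⟨hp.2, hp.1⟩)
    have hratio : ContinuousOn (fun p : EuclideanSpace ℝ (Fin d) × EuclideanSpace ℝ (Fin d) =>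
        Θ (f s) p.2 p.1 * π p.2 / (Θ (f s) p.1 p.2 * π p.1)) (E ×ˢ E) :=
      (hΘ21.mul hπ2).div (hΘc.mul hπ1)
        (fun p hp => (mul_pos (hΘpos _ hp.1 _ hp.2) (hπpos _ hp.1)).ne')
    have hmaps : ∀ p ∈ E ×ˢ E,
        Θ (f s) p.2 p.1 * π p.2 / (Θ (f s) p.1 p.2 * π p.1) ∈ Set.Ici (0:ℝ) :=
      fun p hp => div_nonneg (mul_nonneg (hΘpos _ hp.2 _ hp.1).le (hπpos _ hp.2).le)
        (mul_nonneg (hΘpos _ hp.1 _ hp.2).le (hπpos _ hp.1).le)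
    have hhc : ContinuousOn (fun p : EuclideanSpace ℝ (Fin d) × EuclideanSpace ℝ (Fin d) =>
        h (Θ (f s) p.2 p.1 * π p.2 / (Θ (f s) p.1 p.2 * π p.1))) (E ×ˢ E) :=
      hcont.comp hratio hmaps
    refine ⟨(hπ1.mul hΘc).mul hhc, ?_, ?_⟩
    · intro x hx y hy
      have harg : Θ (f s) y x * π y / (Θ (f s) x y * π x) ∈ Set.Ici (0:ℝ) :=
        div_nonneg (mul_nonneg (hΘpos y hy x hx).le (hπpos y hy).le)
          (mul_nonneg (hΘpos x hx y hy).le (hπpos x hx).le)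
      exact mul_nonneg (mul_nonneg (hπpos x hx).le (hΘpos x hx y hy).le)
        (hrange _ harg).1
    · intro x hx y hy
      have ha : 0 < Θ (f s) x y * π x := mul_pos (hΘpos x hx y hy) (hπpos x hx)
      have hb : 0 < Θ (f s) y x * π y := mul_pos (hΘpos y hy x hx) (hπpos y hy)
      have hu : 0 < Θ (f s) y x * π y / (Θ (f s) x y * π x) := div_pos hb ha
      have hs1 := hsym _ hu
      rw [one_div_div] at hs1
      have hcancel : (Θ (f s) x y * π x) * (Θ (f s) y x * π y / (Θ (f s) x y * π x))
          = Θ (f s) y x * π y := mul_div_cancel₀ _ ha.ne'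
      have key : (Θ (f s) x y * π x) * h (Θ (f s) y x * π y / (Θ (f s) x y * π x))
          = (Θ (f s) y x * π y) * h (Θ (f s) x y * π x / (Θ (f s) y x * π y)) := by
        calc (Θ (f s) x y * π x) * h (Θ (f s) y x * π y / (Θ (f s) x y * π x))
            = (Θ (f s) x y * π x) * ((Θ (f s) y x * π y / (Θ (f s) x y * π x)) *
                h (Θ (f s) x y * π x / (Θ (f s) y x * π y))) := by rw [hs1]
          _ = ((Θ (f s) x y * π x) * (Θ (f s) y x * π y / (Θ (f s) x y * π x))) *
                h (Θ (f s) x y * π x / (Θ (f s) y x * π y)) := by ring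
          _ = (Θ (f s) y x * π y) * h (Θ (f s) x y * π x / (Θ (f s) y x * π y)) := by
                rw [hcancel]
      calc π x * Θ (f s) x y * h (Θ (f s) y x * π y / (Θ (f s) x y * π x))
          = (Θ (f s) x y * π x) * h (Θ (f s) y x * π y / (Θ (f s) x y * π x)) := by ring
        _ = (Θ (f s) y x * π y) * h (Θ (f s) x y * π x / (Θ (f s) y x * π y)) := key
        _ = π y * Θ (f s) y x * h (Θ (f s) x y * π x / (Θ (f s) y x * π y)) := by ring
  -- a.e. lower bound at every time
  have haeInf : ∀ s ∈ Set.Ici (0:ℝ), ∀ᵐ y ∂(volume.restrict E), m ≤ f s y / π y := by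
    have hVd := hentropy (fun w : ℝ => max (m - w) 0 ^ 2) (phiInf_convex m) (phiInf_contDiff m)
    have hIle : ∀ s ∈ Set.Ici (0:ℝ),
        (∫ x in E, deriv (fun w : ℝ => max (m - w) 0 ^ 2) (f s x / π x) *
          (∫ y in E, π x * Θ (f s) x y * h (Θ (f s) y x * π y / (Θ (f s) x y * π x)) *
            (f s y / π y - f s x / π x))) ≤ 0 := by
      intro s hs
      obtain ⟨hKc, hK0, hKsym⟩ := hker s hs
      exact dissipation_nonpos hE
        (fun x y => π x * Θ (f s) x y * h (Θ (f s) y x * π y / (Θ (f s) x y * π x)))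
        (fun x => f s x / π x)
        (fun x => deriv (fun w : ℝ => max (m - w) 0 ^ 2) (f s x / π x))
        (fun v => -(2 * max (m - v) 0))
        hKc hK0 hKsym (hgc s hs) (psiInf_cont m) (psiInf_mono m)
        (fun x _ => by rw [phiInf_deriv])
    have hVanti : AntitoneOn
        (fun s => ∫ x in E, π x * max (m - f s x / π x) 0 ^ 2) (Set.Ici 0) := by
      apply antitoneOn_of_deriv_nonpos (convex_Ici 0)
      · exact fun s hs => (hVd s hs).continuousWithinAt
      · intro s hs
        rw [interior_Ici, mem_Ioi] at hs
        exact ((hVd s (le_of_lt hs)).hasDerivAt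
          (Ici_mem_nhds hs)).differentiableAt.differentiableWithinAt
      · intro s hs
        rw [interior_Ici, mem_Ioi] at hs
        rw [((hVd s (le_of_lt hs)).hasDerivAt (Ici_mem_nhds hs)).deriv]
        exact hIle s (le_of_lt hs)
    have hV0 : (∫ x in E, π x * max (m - f 0 x / π x) 0 ^ 2) = 0 := by
      rw [setIntegral_congr_fun hEm (g := fun _ => (0:ℝ)) ?_]
      · simp
      · intro x hx
        have hx0 : m - f 0 x / π x ≤ 0 := sub_nonpos.2 (hm_le x hx)
        simp [max_eq_right hx0]
    intro s hs
    have hVs0 : (∫ x in E, π x * max (m - f s x / π x) 0 ^ 2) = 0 := by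
      have h1 : (∫ x in E, π x * max (m - f s x / π x) 0 ^ 2)
          ≤ (∫ x in E, π x * max (m - f 0 x / π x) 0 ^ 2) := hVanti h0mem hs hs
      have h2 : 0 ≤ (∫ x in E, π x * max (m - f s x / π x) 0 ^ 2) :=
        setIntegral_nonneg hEm (fun x hx =>
          mul_nonneg (hπpos x hx).le (by positivity))
      rw [hV0] at h1
      linarith
    have hint : IntegrableOn (fun x => π x * max (m - f s x / π x) 0 ^ 2) E volume := by
      apply ContinuousOn.integrableOn_compact hE
      exact hπc.mul (((by fun_prop : Continuous (fun v : ℝ => max v 0 ^ 2))).comp_continuousOn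
        (continuousOn_const.sub (hgc s hs)))
    have hnn : (0 : EuclideanSpace ℝ (Fin d) → ℝ) ≤ᵐ[volume.restrict E]
        (fun x => π x * max (m - f s x / π x) 0 ^ 2) := by
      apply ae_restrict_of_forall_mem hEm
      intro x hx
      exact mul_nonneg (hπpos x hx).le (by positivity)
    have hae0 := (integral_eq_zero_iff_of_nonneg_ae hnn hint).1 hVs0
    filter_upwards [hae0, ae_restrict_mem hEm] with y hy hyE
    simp only [Pi.zero_apply] at hy
    have hy2 : max (m - f s y / π y) 0 ^ 2 = 0 := by
      rcases mul_eq_zero.1 hy with h' | h'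
      · exact absurd h' (hπpos y hyE).ne'
      · exact h'
    have hy3 : max (m - f s y / π y) 0 = 0 := by
      exact (pow_eq_zero_iff two_ne_zero).1 hy2
    have := le_max_left (m - f s y / π y) 0
    rw [hy3] at this
    linarith
  -- a.e. upper bound at every time
  have haeSup : ∀ s ∈ Set.Ici (0:ℝ), ∀ᵐ y ∂(volume.restrict E), f s y / π y ≤ M := by
    have hVd := hentropy (fun w : ℝ => max (w - M) 0 ^ 2) (phiSup_convex M) (phiSup_contDiff M)
    have hIle : ∀ s ∈ Set.Ici (0:ℝ),
        (∫ x in E, deriv (fun w : ℝ => max (w - M) 0 ^ 2) (f s x / π x) *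
          (∫ y in E, π x * Θ (f s) x y * h (Θ (f s) y x * π y / (Θ (f s) x y * π x)) *
            (f s y / π y - f s x / π x))) ≤ 0 := by
      intro s hs
      obtain ⟨hKc, hK0, hKsym⟩ := hker s hs
      exact dissipation_nonpos hE
        (fun x y => π x * Θ (f s) x y * h (Θ (f s) y x * π y / (Θ (f s) x y * π x)))
        (fun x => f s x / π x)
        (fun x => deriv (fun w : ℝ => max (w - M) 0 ^ 2) (f s x / π x))
        (fun v => 2 * max (v - M) 0)
        hKc hK0 hKsym (hgc s hs) (psiSup_cont M) (psiSup_mono M)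
        (fun x _ => by rw [phiSup_deriv])
    have hVanti : AntitoneOn
        (fun s => ∫ x in E, π x * max (f s x / π x - M) 0 ^ 2) (Set.Ici 0) := by
      apply antitoneOn_of_deriv_nonpos (convex_Ici 0)
      · exact fun s hs => (hVd s hs).continuousWithinAt
      · intro s hs
        rw [interior_Ici, mem_Ioi] at hs
        exact ((hVd s (le_of_lt hs)).hasDerivAt
          (Ici_mem_nhds hs)).differentiableAt.differentiableWithinAt
      · intro s hs
        rw [interior_Ici, mem_Ioi] at hs
        rw [((hVd s (le_of_lt hs)).hasDerivAt (Ici_mem_nhds hs)).deriv]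
        exact hIle s (le_of_lt hs)
    have hV0 : (∫ x in E, π x * max (f 0 x / π x - M) 0 ^ 2) = 0 := by
      rw [setIntegral_congr_fun hEm (g := fun _ => (0:ℝ)) ?_]
      · simp
      · intro x hx
        have hx0 : f 0 x / π x - M ≤ 0 := sub_nonpos.2 (hle_M x hx)
        simp [max_eq_right hx0]
    intro s hs
    have hVs0 : (∫ x in E, π x * max (f s x / π x - M) 0 ^ 2) = 0 := by
      have h1 : (∫ x in E, π x * max (f s x / π x - M) 0 ^ 2)
          ≤ (∫ x in E, π x * max (f 0 x / π x - M) 0 ^ 2) := hVanti h0mem hs hs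
      have h2 : 0 ≤ (∫ x in E, π x * max (f s x / π x - M) 0 ^ 2) :=
        setIntegral_nonneg hEm (fun x hx =>
          mul_nonneg (hπpos x hx).le (by positivity))
      rw [hV0] at h1
      linarith
    have hint : IntegrableOn (fun x => π x * max (f s x / π x - M) 0 ^ 2) E volume := by
      apply ContinuousOn.integrableOn_compact hE
      exact hπc.mul (((by fun_prop : Continuous (fun v : ℝ => max v 0 ^ 2))).comp_continuousOn
        ((hgc s hs).sub continuousOn_const))
    have hnn : (0 : EuclideanSpace ℝ (Fin d) → ℝ) ≤ᵐ[volume.restrict E]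
        (fun x => π x * max (f s x / π x - M) 0 ^ 2) := by
      apply ae_restrict_of_forall_mem hEm
      intro x hx
      exact mul_nonneg (hπpos x hx).le (by positivity)
    have hae0 := (integral_eq_zero_iff_of_nonneg_ae hnn hint).1 hVs0
    filter_upwards [hae0, ae_restrict_mem hEm] with y hy hyE
    simp only [Pi.zero_apply] at hy
    have hy2 : max (f s y / π y - M) 0 ^ 2 = 0 := by
      rcases mul_eq_zero.1 hy with h' | h'
      · exact absurd h' (hπpos y hyE).ne'
      · exact h'
    have hy3 : max (f s y / π y - M) 0 = 0 := by
      exact (pow_eq_zero_iff two_ne_zero).1 hy2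
    have := le_max_left (f s y / π y - M) 0
    rw [hy3] at this
    linarith
  intro t ht
  -- pointwise Gronwall, lower bound
  have hptInf : ∀ x ∈ E, m * π x ≤ f t x := by
    intro x hx
    have hπx := hπpos x hx
    have hgr := nonpos_of_right_deriv (fun s => m * π x - f s x)
      (fun s => -(∫ y in E, π x * Θ (f s) x y *
        h (Θ (f s) y x * π y / (Θ (f s) x y * π x)) *
        (f s y / π y - f s x / π x))) ht ?_ ?_ ?_
    · have hgr' : m * π x - f t x ≤ 0 := hgr
      linarith
    · intro s hsI
      exact (hderiv s hsI.1 x hx).const_sub (m * π x)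
    · have h1 := hm_le x hx
      rw [le_div_iff₀ hπx] at h1
      show m * π x - f 0 x ≤ 0
      linarith
    · intro s hsI hu
      have hs : s ∈ Set.Ici (0:ℝ) := hsI.1
      have hu' : 0 ≤ m * π x - f s x := hu
      show -(∫ y in E, π x * Θ (f s) x y *
        h (Θ (f s) y x * π y / (Θ (f s) x y * π x)) *
        (f s y / π y - f s x / π x)) ≤ 0
      rw [neg_nonpos]
      have hgx : f s x / π x ≤ m := by
        rw [div_le_iff₀ hπx]; linarith
      obtain ⟨hΘc, hΘpos, hΘint⟩ := hΘ (f s) (hft s hs)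
      obtain ⟨hKc, hK0, hKsym⟩ := hker s hs
      have hKyc : ContinuousOn (fun y => π x * Θ (f s) x y *
          h (Θ (f s) y x * π y / (Θ (f s) x y * π x))) E :=
        hKc.comp (continuous_const.prodMk continuous_id).continuousOn
          (fun y hy => ⟨hx, hy⟩)
      have hI1 : IntegrableOn (fun y => π x * Θ (f s) x y *
          h (Θ (f s) y x * π y / (Θ (f s) x y * π x)) *
          (f s y / π y - f s x / π x)) E volume :=
        (hKyc.mul ((hgc s hs).sub continuousOn_const)).integrableOn_compact hE
      have hI2 : IntegrableOn (fun y => π x * Θ (f s) x y *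
          h (Θ (f s) y x * π y / (Θ (f s) x y * π x)) *
          (m - f s x / π x)) E volume :=
        (hKyc.mul continuousOn_const).integrableOn_compact hE
      have hmono' : (fun y => π x * Θ (f s) x y *
          h (Θ (f s) y x * π y / (Θ (f s) x y * π x)) * (m - f s x / π x))
          ≤ᵐ[volume.restrict E] (fun y => π x * Θ (f s) x y *
          h (Θ (f s) y x * π y / (Θ (f s) x y * π x)) *
          (f s y / π y - f s x / π x)) := by
        filter_upwards [haeInf s hs, ae_restrict_mem hEm] with y hym hyE
        exact mul_le_mul_of_nonneg_left (by linarith) (hK0 x hx y hyE)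
      have hstep := integral_mono_ae hI2 hI1 hmono'
      refine le_trans ?_ hstep
      rw [integral_mul_const]
      exact mul_nonneg (setIntegral_nonneg hEm (fun y hy => hK0 x hx y hy))
        (by linarith)
  -- pointwise Gronwall, upper bound
  have hptSup : ∀ x ∈ E, f t x ≤ M * π x := by
    intro x hx
    have hπx := hπpos x hx
    have hgr := nonpos_of_right_deriv (fun s => f s x - M * π x)
      (fun s => (∫ y in E, π x * Θ (f s) x y *
        h (Θ (f s) y x * π y / (Θ (f s) x y * π x)) *
        (f s y / π y - f s x / π x))) ht ?_ ?_ ?_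
    · have hgr' : f t x - M * π x ≤ 0 := hgr
      linarith
    · intro s hsI
      exact (hderiv s hsI.1 x hx).sub_const (M * π x)
    · have h1 := hle_M x hx
      rw [div_le_iff₀ hπx] at h1
      show f 0 x - M * π x ≤ 0
      linarith
    · intro s hsI hu
      have hs : s ∈ Set.Ici (0:ℝ) := hsI.1
      have hu' : 0 ≤ f s x - M * π x := hu
      show (∫ y in E, π x * Θ (f s) x y *
        h (Θ (f s) y x * π y / (Θ (f s) x y * π x)) *
        (f s y / π y - f s x / π x)) ≤ 0
      have hgx : M ≤ f s x / π x := by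
        rw [le_div_iff₀ hπx]; linarith
      obtain ⟨hΘc, hΘpos, hΘint⟩ := hΘ (f s) (hft s hs)
      obtain ⟨hKc, hK0, hKsym⟩ := hker s hs
      have hKyc : ContinuousOn (fun y => π x * Θ (f s) x y *
          h (Θ (f s) y x * π y / (Θ (f s) x y * π x))) E :=
        hKc.comp (continuous_const.prodMk continuous_id).continuousOn
          (fun y hy => ⟨hx, hy⟩)
      have hI1 : IntegrableOn (fun y => π x * Θ (f s) x y *
          h (Θ (f s) y x * π y / (Θ (f s) x y * π x)) *
          (f s y / π y - f s x / π x)) E volume :=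
        (hKyc.mul ((hgc s hs).sub continuousOn_const)).integrableOn_compact hE
      have hI2 : IntegrableOn (fun y => π x * Θ (f s) x y *
          h (Θ (f s) y x * π y / (Θ (f s) x y * π x)) *
          (M - f s x / π x)) E volume :=
        (hKyc.mul continuousOn_const).integrableOn_compact hE
      have hmono' : (fun y => π x * Θ (f s) x y *
          h (Θ (f s) y x * π y / (Θ (f s) x y * π x)) *
          (f s y / π y - f s x / π x))
          ≤ᵐ[volume.restrict E] (fun y => π x * Θ (f s) x y *
          h (Θ (f s) y x * π y / (Θ (f s) x y * π x)) * (M - f s x / π x)) := by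
        filter_upwards [haeSup s hs, ae_restrict_mem hEm] with y hym hyE
        exact mul_le_mul_of_nonneg_left (by linarith) (hK0 x hx y hyE)
      have hstep := integral_mono_ae hI1 hI2 hmono'
      refine le_trans hstep ?_
      rw [integral_mul_const]
      exact mul_nonpos_of_nonneg_of_nonpos
        (setIntegral_nonneg hEm (fun y hy => hK0 x hx y hy)) (by linarith)
  constructor
  · apply le_csInf (hEne.image _)
    rintro b ⟨x, hx, rfl⟩
    rw [le_div_iff₀ (hπpos x hx)]
    exact hptInf x hx
  · apply csSup_le (hEne.image _)
    rintro b ⟨x, hx, rfl⟩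
    rw [div_le_iff₀ (hπpos x hx)]
    exact hptSup x hx
end

section
/- Assume the proposal distribution Θ satisfies the monotonicity assumption: there is a non-decreasing function c⁻ : (0,∞) → (0,1] such that for every continuous positive probability density f on E, inf_{x,y∈E} Θ_f(y|x)/π(y) ≥ c⁻(inf_{x∈E} f(x)/π(x)). Let f be a solution of the nonlinear Metropolis evolution equation with initial condition f₀ a continuous positive probability density, let m := inf_{x∈E} f₀(x)/π(x) > 0, and let H(t) := (1/2)·∫_E π(x)·|f_t(x)/π(x) − 1|² dx. Then for all t ≥ 0, H(t) ≤ H(0)·exp(−2·c⁻(m)·h(1)·t). -/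
open MeasureTheory Set

section AuxStmt9

lemma aux_convex : ConvexOn ℝ Set.univ (fun v : ℝ => (v - 1) ^ 2) := by
  have h2 : ConvexOn ℝ univ (fun x : ℝ => x ^ 2) := Even.convexOn_pow even_two
  have h3 := h2.translate_right (-1)
  simp only [preimage_univ] at h3
  have : (fun v : ℝ => (v - 1) ^ 2) = ((fun x : ℝ => x ^ 2) ∘ fun z : ℝ => (-1) + z) := by
    funext v; simp only [Function.comp_apply]; ring
  rw [this]; exact h3

lemma aux_deriv : deriv (fun v : ℝ => (v - 1) ^ 2) = fun v => 2 * (v - 1) := by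
  funext v
  have : HasDerivAt (fun v : ℝ => (v - 1) ^ 2) (2 * (v - 1)) v := by
    have := ((hasDerivAt_id v).sub_const 1).pow 2
    refine this.congr_deriv ?_
    simp
  exact this.deriv

lemma aux_contdiff : ContDiff ℝ 1 (fun v : ℝ => (v - 1) ^ 2) :=
  (contDiff_id.sub contDiff_const).pow 2

lemma aux_const_of_deriv_zero (ψ : ℝ → ℝ) (hc : ContinuousOn ψ (Ici 0))
    (hd : ∀ t ∈ Ici (0:ℝ), HasDerivWithinAt ψ 0 (Ici 0) t) :
    ∀ t ∈ Ici (0:ℝ), ψ t = ψ 0 := by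
  intro t ht
  exact constant_of_has_deriv_right_zero (hc.mono Icc_subset_Ici_self)
    (fun s hs => (hd s hs.1).mono (Ici_subset_Ici.mpr hs.1)) t ⟨ht, le_rfl⟩

lemma aux_gronwall (u DH : ℝ → ℝ) (lam : ℝ)
    (hu : ∀ t ∈ Ici (0:ℝ), HasDerivWithinAt u (DH t) (Ici 0) t)
    (hb : ∀ t ∈ Ici (0:ℝ), DH t ≤ -lam * u t) :
    ∀ t ∈ Ici (0:ℝ), u t ≤ u 0 * Real.exp (-lam * t) := by
  intro t ht
  set v : ℝ → ℝ := fun s => u s * Real.exp (lam * s) with hv_def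
  have hv : ∀ s ∈ Ici (0:ℝ), HasDerivWithinAt v
      ((DH s + lam * u s) * Real.exp (lam * s)) (Ici 0) s := by
    intro s hs
    have he : HasDerivAt (fun r => Real.exp (lam * r)) (Real.exp (lam * s) * lam) s := by
      simpa [Function.comp_def] using (Real.hasDerivAt_exp (lam * s)).comp s ((hasDerivAt_id s).const_mul lam)
    have := (hu s hs).mul he.hasDerivWithinAt
    refine this.congr_deriv ?_
    ring
  have hvc : ContinuousOn v (Ici 0) := fun s hs => (hv s hs).continuousWithinAt
  have hmono : AntitoneOn v (Ici 0) := by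
    apply antitoneOn_of_deriv_nonpos (convex_Ici 0) hvc
    · intro s hs
      rw [interior_Ici] at hs
      exact ((hv s (mem_Ici.mpr (le_of_lt (mem_Ioi.mp hs)))).hasDerivAt
        (Ici_mem_nhds hs)).differentiableAt.differentiableWithinAt
    · intro s hs
      rw [interior_Ici] at hs
      have hda := (hv s (mem_Ici.mpr (le_of_lt (mem_Ioi.mp hs)))).hasDerivAt (Ici_mem_nhds hs)
      rw [hda.deriv]
      apply mul_nonpos_of_nonpos_of_nonneg
      · have := hb s (mem_Ici.mpr (le_of_lt (mem_Ioi.mp hs))); linarith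
      · exact (Real.exp_pos _).le
  have hvt : v t ≤ v 0 := hmono self_mem_Ici ht ht
  have h1 : v 0 = u 0 := by simp [hv_def]
  have h2 : u t = v t * Real.exp (-lam * t) := by
    simp only [hv_def]
    rw [mul_assoc, ← Real.exp_add]
    norm_num
  rw [h2]
  calc v t * Real.exp (-lam * t) ≤ v 0 * Real.exp (-lam * t) :=
        mul_le_mul_of_nonneg_right hvt (Real.exp_pos _).le
    _ = u 0 * Real.exp (-lam * t) := by rw [h1]

lemma aux_dirichlet {X : Type*} [MeasurableSpace X] {μ : Measure X} [SFinite μ]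
    (K : X → X → ℝ) (g w : X → ℝ) (c : ℝ)
    (hI1 : Integrable (fun z : X × X => 2 * (g z.1 - 1) * (K z.1 z.2 * (g z.2 - g z.1))) (μ.prod μ))
    (hI2 : Integrable (fun z : X × X => K z.1 z.2 * (g z.2 - g z.1) ^ 2) (μ.prod μ))
    (hIw : Integrable w μ) (hIwg : Integrable (fun x => w x * g x) μ)
    (hIwg2 : Integrable (fun x => w x * g x ^ 2) μ)
    (hKsym : ∀ᵐ z : X × X ∂μ.prod μ, K z.1 z.2 = K z.2 z.1)
    (hKlb : ∀ᵐ z : X × X ∂μ.prod μ, c * (w z.1 * w z.2) ≤ K z.1 z.2)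
    (hw1 : ∫ x, w x ∂μ = 1) (hwg1 : ∫ x, w x * g x ∂μ = 1) :
    ∫ x, 2 * (g x - 1) * ∫ y, K x y * (g y - g x) ∂μ ∂μ
      ≤ -(2 * c) * ∫ x, w x * (g x - 1) ^ 2 ∂μ := by
  have step1 : ∫ x, 2 * (g x - 1) * ∫ y, K x y * (g y - g x) ∂μ ∂μ
      = ∫ z : X × X, 2 * (g z.1 - 1) * (K z.1 z.2 * (g z.2 - g z.1)) ∂μ.prod μ := by
    simp_rw [← integral_const_mul]
    exact integral_integral (by exact hI1)
  have hI1s : Integrable (fun z : X × X => 2 * (g z.2 - 1) * (K z.2 z.1 * (g z.1 - g z.2)))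
      (μ.prod μ) := by
    have := hI1.swap
    simpa [Function.comp_def] using this
  have step2 : ∫ z : X × X, 2 * (g z.1 - 1) * (K z.1 z.2 * (g z.2 - g z.1)) ∂μ.prod μ
      = ∫ z : X × X, 2 * (g z.2 - 1) * (K z.2 z.1 * (g z.1 - g z.2)) ∂μ.prod μ := by
    rw [← integral_prod_swap (fun z : X × X => 2 * (g z.1 - 1) * (K z.1 z.2 * (g z.2 - g z.1)))]
    rfl
  have step3 : ∫ z : X × X, 2 * (g z.1 - 1) * (K z.1 z.2 * (g z.2 - g z.1)) ∂μ.prod μ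
      = -∫ z : X × X, K z.1 z.2 * (g z.2 - g z.1) ^ 2 ∂μ.prod μ := by
    have hsum : ∫ z : X × X, (2 * (g z.1 - 1) * (K z.1 z.2 * (g z.2 - g z.1))
        + 2 * (g z.2 - 1) * (K z.2 z.1 * (g z.1 - g z.2))) ∂μ.prod μ
        = ∫ z : X × X, (-2 : ℝ) * (K z.1 z.2 * (g z.2 - g z.1) ^ 2) ∂μ.prod μ := by
      apply integral_congr_ae
      filter_upwards [hKsym] with z hz
      rw [← hz]
      ring
    rw [integral_add hI1 hI1s, ← step2, integral_const_mul] at hsum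
    linarith
  rw [step1, step3]
  have hIm : Integrable (fun z : X × X => c * (w z.1 * w z.2) * (g z.2 - g z.1) ^ 2)
      (μ.prod μ) := by
    have e : (fun z : X × X => c * (w z.1 * w z.2) * (g z.2 - g z.1) ^ 2)
        = fun z : X × X => c * (w z.1 * (w z.2 * g z.2 ^ 2))
            + c * ((w z.1 * g z.1 ^ 2) * w z.2)
            - (2 * c) * ((w z.1 * g z.1) * (w z.2 * g z.2)) := by
      funext z; ring
    rw [e]
    exact (((hIw.mul_prod hIwg2).const_mul c).add
      ((hIwg2.mul_prod hIw).const_mul c)).sub ((hIwg.mul_prod hIwg).const_mul (2*c))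
  have step4 : ∫ z : X × X, c * (w z.1 * w z.2) * (g z.2 - g z.1) ^ 2 ∂μ.prod μ
      ≤ ∫ z : X × X, K z.1 z.2 * (g z.2 - g z.1) ^ 2 ∂μ.prod μ := by
    apply integral_mono_ae hIm hI2
    filter_upwards [hKlb] with z hz
    exact mul_le_mul_of_nonneg_right hz (sq_nonneg _)
  have step5 : ∫ z : X × X, c * (w z.1 * w z.2) * (g z.2 - g z.1) ^ 2 ∂μ.prod μ
      = (2 * c) * ∫ x, w x * (g x - 1) ^ 2 ∂μ := by
    have e : (fun z : X × X => c * (w z.1 * w z.2) * (g z.2 - g z.1) ^ 2)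
        = fun z : X × X => c * (w z.1 * (w z.2 * g z.2 ^ 2))
            + c * ((w z.1 * g z.1 ^ 2) * w z.2)
            - (2 * c) * ((w z.1 * g z.1) * (w z.2 * g z.2)) := by
      funext z; ring
    have hA1 : Integrable (fun z : X × X => c * (w z.1 * (w z.2 * g z.2 ^ 2))) (μ.prod μ) :=
      (hIw.mul_prod hIwg2).const_mul c
    have hA2 : Integrable (fun z : X × X => c * ((w z.1 * g z.1 ^ 2) * w z.2)) (μ.prod μ) :=
      (hIwg2.mul_prod hIw).const_mul c
    have hA : Integrable (fun z : X × X => c * (w z.1 * (w z.2 * g z.2 ^ 2))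
        + c * ((w z.1 * g z.1 ^ 2) * w z.2)) (μ.prod μ) := by exact hA1.add hA2
    have hB : Integrable (fun z : X × X => (2 * c) * ((w z.1 * g z.1) * (w z.2 * g z.2)))
        (μ.prod μ) := (hIwg.mul_prod hIwg).const_mul (2*c)
    rw [e]
    rw [integral_sub hA hB]
    rw [integral_add hA1 hA2]
    rw [integral_const_mul, integral_const_mul, integral_const_mul]
    have P1 : ∫ (a : X × X), w a.1 * (w a.2 * g a.2 ^ 2) ∂μ.prod μ
        = (∫ x, w x ∂μ) * ∫ y, w y * g y ^ 2 ∂μ := by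
      exact integral_prod_mul w (fun y => w y * g y ^ 2)
    have P2 : ∫ (a : X × X), w a.1 * g a.1 ^ 2 * w a.2 ∂μ.prod μ
        = (∫ x, w x * g x ^ 2 ∂μ) * ∫ y, w y ∂μ := by
      exact integral_prod_mul (fun x => w x * g x ^ 2) w
    have P3 : ∫ (a : X × X), w a.1 * g a.1 * (w a.2 * g a.2) ∂μ.prod μ
        = (∫ x, w x * g x ∂μ) * ∫ y, w y * g y ∂μ := by
      exact integral_prod_mul (fun x => w x * g x) (fun y => w y * g y)
    rw [P1, P2, P3, hw1, hwg1]
    have ewg2 : ∫ x, w x * (g x - 1) ^ 2 ∂μ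
        = (∫ x, w x * g x ^ 2 ∂μ) - 2 * (∫ x, w x * g x ∂μ) + ∫ x, w x ∂μ := by
      have hC : Integrable (fun x => w x * g x ^ 2 - 2 * (w x * g x)) μ := by
        exact hIwg2.sub (hIwg.const_mul 2)
      rw [← integral_const_mul, ← integral_sub hIwg2 (hIwg.const_mul 2), ← integral_add hC hIw]
      congr 1; funext x; ring
    rw [ewg2, hw1, hwg1]
    ring
  linarith

end AuxStmt9

set_option maxHeartbeats 1000000

/-- Under the monotonicity assumption on the proposal distribution
(there is a non-decreasing `c⁻ : (0,∞) → (0,1]` with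
`Θ_g(y|x)/π(y) ≥ c⁻(inf_E g/π)` for every continuous positive probability density
`g` and all `x, y ∈ E`), if `f` solves the nonlinear Metropolis evolution equation
with `m := inf_E f₀/π > 0` and `H(t) := (1/2)∫_E π|f_t/π − 1|²`, then
`H(t) ≤ H(0)·exp(−2 c⁻(m) h(1) t)` for all `t ≥ 0`.
Here `Θ g x y` denotes `Θ_g(y|x)`. -/
theorem stmt_9 {d : ℕ} (E : Set (EuclideanSpace ℝ (Fin d))) (hE : IsCompact E)
    (π : EuclideanSpace ℝ (Fin d) → ℝ) (hπ : IsPosDensityOn E π)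
    (h : ℝ → ℝ)
    (hcont : ContinuousOn h (Set.Ici 0))
    (hmono : MonotoneOn h (Set.Ici 0))
    (hrange : ∀ u ∈ Set.Ici (0 : ℝ), h u ∈ Set.Icc (0 : ℝ) 1)
    (hlip : ∃ L : NNReal, LipschitzOnWith L h (Set.Ici 0))
    (hsym : ∀ u : ℝ, 0 < u → u * h (1 / u) = h u)
    (Θ : (EuclideanSpace ℝ (Fin d) → ℝ) →
      EuclideanSpace ℝ (Fin d) → EuclideanSpace ℝ (Fin d) → ℝ)
    (hΘ : ∀ g, IsPosDensityOn E g →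
      ContinuousOn (fun p : EuclideanSpace ℝ (Fin d) × EuclideanSpace ℝ (Fin d) =>
        Θ g p.1 p.2) (E ×ˢ E) ∧
      (∀ x ∈ E, ∀ y ∈ E, 0 < Θ g x y) ∧
      (∀ x ∈ E, (∫ y in E, Θ g x y) = 1))
    (cminus : ℝ → ℝ)
    (hcm_mono : MonotoneOn cminus (Set.Ioi 0))
    (hcm_range : ∀ m : ℝ, 0 < m → cminus m ∈ Set.Ioc (0 : ℝ) 1)
    (hmonot : ∀ g, IsPosDensityOn E g → ∀ x ∈ E, ∀ y ∈ E,
      cminus (sInf ((fun z => g z / π z) '' E)) ≤ Θ g x y / π y)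
    (f : ℝ → EuclideanSpace ℝ (Fin d) → ℝ)
    (hfc : ContinuousOn (fun p : ℝ × EuclideanSpace ℝ (Fin d) => f p.1 p.2)
      (Set.Ici 0 ×ˢ E))
    (hft : ∀ t ∈ Set.Ici (0 : ℝ), IsPosDensityOn E (f t))
    (hm : 0 < sInf ((fun x => f 0 x / π x) '' E))
    (hderiv : ∀ t ∈ Set.Ici (0 : ℝ), ∀ x ∈ E,
      HasDerivWithinAt (fun s => f s x)
        (∫ y in E, π x * Θ (f t) x y *
          h (Θ (f t) y x * π y / (Θ (f t) x y * π x)) *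
          (f t y / π y - f t x / π x)) (Set.Ici 0) t)
    (hentropy : ∀ φ : ℝ → ℝ, ConvexOn ℝ Set.univ φ → ContDiff ℝ 1 φ →
      ∀ t ∈ Set.Ici (0 : ℝ),
      HasDerivWithinAt (fun s => ∫ x in E, π x * φ (f s x / π x))
        (∫ x in E, deriv φ (f t x / π x) *
          (∫ y in E, π x * Θ (f t) x y *
            h (Θ (f t) y x * π y / (Θ (f t) x y * π x)) *
            (f t y / π y - f t x / π x))) (Set.Ici 0) t) :
    ∀ t ∈ Set.Ici (0 : ℝ),
      (1 / 2) * ∫ x in E, π x * |f t x / π x - 1| ^ 2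
        ≤ ((1 / 2) * ∫ x in E, π x * |f 0 x / π x - 1| ^ 2) *
            Real.exp (-2 * cminus (sInf ((fun x => f 0 x / π x) '' E)) * h 1 * t) := by
  classical
  obtain ⟨hπc, hπpos, hπint⟩ := hπ
  have hEm : MeasurableSet E := hE.measurableSet
  have hEne : E.Nonempty := by
    by_contra hne
    rw [not_nonempty_iff_eq_empty] at hne
    rw [hne] at hπint
    simp at hπint
  set m := sInf ((fun x => f 0 x / π x) '' E) with hm_def
  have hgtc : ∀ t ∈ Ici (0:ℝ), ContinuousOn (fun x => f t x / π x) E := by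
    intro t ht
    exact (hft t ht).1.div hπc (fun x hx => (hπpos x hx).ne')
  have hm_le : ∀ x ∈ E, m ≤ f 0 x / π x := by
    intro x hx
    exact csInf_le ((hE.image_of_continuousOn (hgtc 0 self_mem_Ici)).bddBelow) (mem_image_of_mem _ hx)
  have hmass : ∀ t ∈ Ici (0:ℝ), (∫ x in E, π x * (f t x / π x)) = 1 := by
    intro t ht
    rw [setIntegral_congr_fun hEm (g := f t) (fun x hx => by rw [mul_comm, div_mul_cancel₀ _ (hπpos x hx).ne'])]
    exact (hft t ht).2.2
  have hm1 : m ≤ 1 := by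
    have h1 : (∫ x in E, π x * m) ≤ ∫ x in E, π x * (f 0 x / π x) :=
      setIntegral_mono_on ((hπc.integrableOn_compact hE).mul_const m)
        ((hπc.mul (hgtc 0 self_mem_Ici)).integrableOn_compact hE) hEm
        (fun x hx => mul_le_mul_of_nonneg_left (hm_le x hx) (hπpos x hx).le)
    rw [hmass 0 self_mem_Ici, integral_mul_const, hπint, one_mul] at h1
    exact h1
  have hh0 : ∀ u : ℝ, 0 ≤ u → 0 ≤ h u := fun u hu => (hrange u hu).1
  -- ============ MINIMUM PRINCIPLE ============
  have hglb : ∀ t ∈ Ici (0:ℝ), ∀ x ∈ E, m ≤ f t x / π x := by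
    by_cases hone : h 1 = 0
    · -- degenerate case: h vanished identically on [0, ∞)
      have hzero : ∀ u : ℝ, 0 ≤ u → h u = 0 := by
        intro u hu
        rcases eq_or_lt_of_le hu with he | hu'
        · refine le_antisymm ?_ (hh0 u hu)
          calc h u ≤ h 1 := hmono (mem_Ici.mpr hu) (mem_Ici.mpr zero_le_one)
                (by rw [← he]; exact zero_le_one)
            _ = 0 := hone
        · rcases le_or_gt u 1 with h1 | h2
          · refine le_antisymm ?_ (hh0 u hu)
            calc h u ≤ h 1 := hmono (mem_Ici.mpr hu) (mem_Ici.mpr zero_le_one) h1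
              _ = 0 := hone
          · rw [← hsym u hu']
            have hinv : h (1/u) = 0 := by
              refine le_antisymm ?_ (hh0 _ (by positivity))
              calc h (1/u) ≤ h 1 := hmono (mem_Ici.mpr (by positivity))
                    (mem_Ici.mpr zero_le_one) (by rw [div_le_one hu']; linarith)
                _ = 0 := hone
            rw [hinv, mul_zero]
      intro t ht x hx
      have hcst : f t x = f 0 x := by
        apply aux_const_of_deriv_zero (fun s => f s x) ?_ ?_ t ht
        · exact hfc.comp (continuous_id.prodMk continuous_const).continuousOn
            (fun s hs => mk_mem_prod hs hx)
        · intro s hs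
          have hD := hderiv s hs x hx
          obtain ⟨hQc, hQpos, hQint⟩ := hΘ (f s) (hft s hs)
          have hz : (∫ y in E, π x * Θ (f s) x y *
              h (Θ (f s) y x * π y / (Θ (f s) x y * π x)) *
              (f s y / π y - f s x / π x)) = 0 := by
            rw [setIntegral_congr_fun hEm (g := fun _ => (0:ℝ))]
            · simp
            · intro y hy
              beta_reduce
              have harg : 0 ≤ Θ (f s) y x * π y / (Θ (f s) x y * π x) :=
                div_nonneg (mul_nonneg (hQpos y hy x hx).le (hπpos y hy).le)
                  (mul_nonneg (hQpos x hx y hy).le (hπpos x hx).le)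
              rw [hzero _ harg]
              ring
          rwa [hz] at hD
      rw [hcst]
      exact hm_le x hx
    · -- nondegenerate case
      have honepos : 0 < h 1 := lt_of_le_of_ne (hh0 1 zero_le_one) (Ne.symm hone)
      have hhpos : ∀ u : ℝ, 0 < u → 0 < h u := by
        intro u hu
        rcases le_or_gt 1 u with h1u | hu1
        · exact lt_of_lt_of_le honepos
            (hmono (mem_Ici.mpr zero_le_one) (mem_Ici.mpr hu.le) h1u)
        · rw [← hsym u hu]
          have h1le : (1:ℝ) ≤ 1 / u := by rw [le_div_iff₀ hu]; linarith
          have := hmono (mem_Ici.mpr zero_le_one) (mem_Ici.mpr (by positivity)) h1le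
          exact mul_pos hu (lt_of_lt_of_le honepos this)
      intro T hT
      have hKcomp : IsCompact (Icc (0:ℝ) T ×ˢ E) := isCompact_Icc.prod hE
      have hKne : (Icc (0:ℝ) T ×ˢ E).Nonempty :=
        ⟨(0, hEne.choose), mk_mem_prod (left_mem_Icc.mpr hT) hEne.choose_spec⟩
      have hGcont : ContinuousOn (fun p : ℝ × EuclideanSpace ℝ (Fin d) => f p.1 p.2 / π p.2)
          (Icc (0:ℝ) T ×ˢ E) := by
        apply ContinuousOn.div
        · exact hfc.mono (prod_mono Icc_subset_Ici_self (subset_refl E))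
        · exact hπc.comp continuous_snd.continuousOn (fun p hp => hp.2)
        · exact fun p hp => (hπpos p.2 hp.2).ne'
      obtain ⟨p₀, hp₀, hp₀min⟩ := hKcomp.exists_isMinOn hKne hGcont
      have ht₀ : p₀.1 ∈ Icc (0:ℝ) T := hp₀.1
      have hx₀ : p₀.2 ∈ E := hp₀.2
      have hmin : ∀ s ∈ Icc (0:ℝ) T, ∀ y ∈ E, f p₀.1 p₀.2 / π p₀.2 ≤ f s y / π y := by
        intro s hs y hy
        exact hp₀min (mk_mem_prod hs hy)
      suffices hsuff : m ≤ f p₀.1 p₀.2 / π p₀.2 by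
        intro x hx
        exact le_trans hsuff (hmin T (right_mem_Icc.mpr hT) x hx)
      rcases eq_or_lt_of_le ht₀.1 with h0 | h0
      · rw [← h0]
        exact hm_le p₀.2 hx₀
      · have ht₀i : p₀.1 ∈ Ici (0:ℝ) := le_of_lt h0
        obtain ⟨hQc, hQpos, hQint⟩ := hΘ (f p₀.1) (hft p₀.1 ht₀i)
        have hDW := hderiv p₀.1 ht₀i p₀.2 hx₀
        set D := ∫ y in E, π p₀.2 * Θ (f p₀.1) p₀.2 y *
          h (Θ (f p₀.1) y p₀.2 * π y / (Θ (f p₀.1) p₀.2 y * π p₀.2)) *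
          (f p₀.1 y / π y - f p₀.1 p₀.2 / π p₀.2) with hD_def
        have hptnn : ∀ y ∈ E, 0 ≤ π p₀.2 * Θ (f p₀.1) p₀.2 y *
            h (Θ (f p₀.1) y p₀.2 * π y / (Θ (f p₀.1) p₀.2 y * π p₀.2)) *
            (f p₀.1 y / π y - f p₀.1 p₀.2 / π p₀.2) := by
          intro y hy
          have harg : 0 < Θ (f p₀.1) y p₀.2 * π y / (Θ (f p₀.1) p₀.2 y * π p₀.2) :=
            div_pos (mul_pos (hQpos y hy p₀.2 hx₀) (hπpos y hy))
              (mul_pos (hQpos p₀.2 hx₀ y hy) (hπpos p₀.2 hx₀))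
          have hdiff : 0 ≤ f p₀.1 y / π y - f p₀.1 p₀.2 / π p₀.2 := by
            have := hmin p₀.1 ht₀ y hy
            linarith
          have := mul_pos (mul_pos (hπpos p₀.2 hx₀) (hQpos p₀.2 hx₀ y hy)) (hhpos _ harg)
          exact mul_nonneg this.le hdiff
        have hDnn : 0 ≤ D := setIntegral_nonneg hEm hptnn
        rcases eq_or_lt_of_le hDnn with hD0 | hDpos
        · -- zero derivative at the minimum: density must be ≡ min a.e., so min = 1
          have hNcont : ContinuousOn (fun y => π p₀.2 * Θ (f p₀.1) p₀.2 y *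
              h (Θ (f p₀.1) y p₀.2 * π y / (Θ (f p₀.1) p₀.2 y * π p₀.2)) *
              (f p₀.1 y / π y - f p₀.1 p₀.2 / π p₀.2)) E := by
            have hq1 : ContinuousOn (fun y => Θ (f p₀.1) p₀.2 y) E :=
              hQc.comp (continuous_const.prodMk continuous_id).continuousOn
                (fun y hy => mk_mem_prod hx₀ hy)
            have hq2 : ContinuousOn (fun y => Θ (f p₀.1) y p₀.2) E :=
              hQc.comp (continuous_id.prodMk continuous_const).continuousOn
                (fun y hy => mk_mem_prod hy hx₀)
            have hαc : ContinuousOn (fun y =>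
                Θ (f p₀.1) y p₀.2 * π y / (Θ (f p₀.1) p₀.2 y * π p₀.2)) E := by
              apply ContinuousOn.div (hq2.mul hπc) (hq1.mul continuousOn_const)
              intro y hy
              exact (mul_pos (hQpos p₀.2 hx₀ y hy) (hπpos p₀.2 hx₀)).ne'
            have hhc : ContinuousOn (fun y =>
                h (Θ (f p₀.1) y p₀.2 * π y / (Θ (f p₀.1) p₀.2 y * π p₀.2))) E := by
              apply hcont.comp hαc
              intro y hy
              exact mem_Ici.mpr (div_nonneg (mul_nonneg (hQpos y hy p₀.2 hx₀).le
                (hπpos y hy).le) (mul_nonneg (hQpos p₀.2 hx₀ y hy).le (hπpos p₀.2 hx₀).le))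
            exact ((continuousOn_const.mul hq1).mul hhc).mul
              ((hgtc p₀.1 ht₀i).sub continuousOn_const)
          have hNint : IntegrableOn (fun y => π p₀.2 * Θ (f p₀.1) p₀.2 y *
              h (Θ (f p₀.1) y p₀.2 * π y / (Θ (f p₀.1) p₀.2 y * π p₀.2)) *
              (f p₀.1 y / π y - f p₀.1 p₀.2 / π p₀.2)) E volume :=
            hNcont.integrableOn_compact hE
          have hnn_ae : 0 ≤ᶠ[ae (volume.restrict E)] (fun y => π p₀.2 * Θ (f p₀.1) p₀.2 y *
              h (Θ (f p₀.1) y p₀.2 * π y / (Θ (f p₀.1) p₀.2 y * π p₀.2)) *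
              (f p₀.1 y / π y - f p₀.1 p₀.2 / π p₀.2)) := by
            filter_upwards [ae_restrict_mem hEm] with y hy
            exact hptnn y hy
          have hae := (setIntegral_eq_zero_iff_of_nonneg_ae hnn_ae hNint).mp hD0.symm
          have hgear : (fun y => π y * (f p₀.1 y / π y))
              =ᶠ[ae (volume.restrict E)] (fun y => π y * (f p₀.1 p₀.2 / π p₀.2)) := by
            filter_upwards [hae, ae_restrict_mem hEm] with y hy hyE
            have harg : 0 < Θ (f p₀.1) y p₀.2 * π y / (Θ (f p₀.1) p₀.2 y * π p₀.2) :=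
              div_pos (mul_pos (hQpos y hyE p₀.2 hx₀) (hπpos y hyE))
                (mul_pos (hQpos p₀.2 hx₀ y hyE) (hπpos p₀.2 hx₀))
            have hfac : 0 < π p₀.2 * Θ (f p₀.1) p₀.2 y *
                h (Θ (f p₀.1) y p₀.2 * π y / (Θ (f p₀.1) p₀.2 y * π p₀.2)) :=
              mul_pos (mul_pos (hπpos p₀.2 hx₀) (hQpos p₀.2 hx₀ y hyE)) (hhpos _ harg)
            have hzero2 : f p₀.1 y / π y - f p₀.1 p₀.2 / π p₀.2 = 0 := by
              rcases mul_eq_zero.mp hy with hcase | hcase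
              · exact absurd hcase hfac.ne'
              · exact hcase
            have : f p₀.1 y / π y = f p₀.1 p₀.2 / π p₀.2 := by linarith
            rw [this]
          have hint_eq := integral_congr_ae hgear
          beta_reduce at hint_eq
          rw [hmass p₀.1 ht₀i, integral_mul_const, hπint, one_mul] at hint_eq
      -- hint_eq : 1 = f p₀.1 p₀.2 / π p₀.2
          linarith
        · -- positive derivative at a positive-time minimum: contradiction
          exfalso
          have hDa : HasDerivAt (fun s => f s p₀.2) D p₀.1 :=
            hDW.hasDerivAt (Ici_mem_nhds h0)
          rw [hasDerivAt_iff_tendsto_slope] at hDa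
          have hlt : Filter.Tendsto (slope (fun s => f s p₀.2) p₀.1)
              (nhdsWithin p₀.1 (Iio p₀.1)) (nhds D) :=
            hDa.mono_left (nhdsWithin_mono p₀.1 (fun s hs => ne_of_lt hs))
          have hev1 : ∀ᶠ s in nhdsWithin p₀.1 (Iio p₀.1),
              slope (fun s => f s p₀.2) p₀.1 s ∈ Ioi (0:ℝ) := hlt (Ioi_mem_nhds hDpos)
          have hev2 : ∀ᶠ s in nhdsWithin p₀.1 (Iio p₀.1), s ∈ Ioi (0:ℝ) :=
            nhdsWithin_le_nhds (Ioi_mem_nhds h0)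
          have hev3 : ∀ᶠ s in nhdsWithin p₀.1 (Iio p₀.1), s ∈ Iio p₀.1 :=
            self_mem_nhdsWithin
          have hne2 : (nhdsWithin p₀.1 (Iio p₀.1)).NeBot := by infer_instance
          obtain ⟨s, hs1, hs2, hs3⟩ := ((hev1.and (hev2.and hev3))).exists
          have hsmem : s ∈ Icc (0:ℝ) T := ⟨le_of_lt hs2, le_trans (le_of_lt hs3) ht₀.2⟩
          have hge : f p₀.1 p₀.2 ≤ f s p₀.2 := by
            have := hmin s hsmem p₀.2 hx₀
            rw [div_le_div_iff_of_pos_right] at this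
            · exact this
            · exact hπpos p₀.2 hx₀
          have hslope : slope (fun s => f s p₀.2) p₀.1 s ≤ 0 := by
            rw [slope_def_field]
            rw [mem_Iio] at hs3
            rw [mem_Ioi] at hs2
            exact div_nonpos_of_nonneg_of_nonpos (by linarith) (by linarith)
          rw [mem_Ioi] at hs1
          linarith
  -- ============ ENTROPY DISSIPATION + GRONWALL ============
  have hent := hentropy (fun v => (v - 1) ^ 2) aux_convex aux_contdiff
  simp only [aux_deriv] at hent
  have hbound : ∀ t ∈ Ici (0:ℝ),
      (∫ x in E, 2 * (f t x / π x - 1) *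
        ∫ y in E, π x * Θ (f t) x y * h (Θ (f t) y x * π y / (Θ (f t) x y * π x)) *
          (f t y / π y - f t x / π x))
      ≤ -(2 * (cminus m * h 1)) * ∫ x in E, π x * (f t x / π x - 1) ^ 2 := by
    intro t ht
    obtain ⟨hQc, hQpos, hQint⟩ := hΘ (f t) (hft t ht)
    have hgc := hgtc t ht
    have hKsymm : ∀ x ∈ E, ∀ y ∈ E,
        π x * Θ (f t) x y * h (Θ (f t) y x * π y / (Θ (f t) x y * π x))
        = π y * Θ (f t) y x * h (Θ (f t) x y * π x / (Θ (f t) y x * π y)) := by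
      intro x hx y hy
      have hQxy := hQpos x hx y hy
      have hQyx := hQpos y hy x hx
      have hπx := hπpos x hx
      have hπy := hπpos y hy
      have ha : 0 < Θ (f t) y x * π y / (Θ (f t) x y * π x) :=
        div_pos (mul_pos hQyx hπy) (mul_pos hQxy hπx)
      have hs := hsym _ ha
      have e1 : 1 / (Θ (f t) y x * π y / (Θ (f t) x y * π x))
          = Θ (f t) x y * π x / (Θ (f t) y x * π y) := one_div_div _ _
      rw [← hs, e1]
      field_simp
    have hmt_ne : ((fun z => f t z / π z) '' E).Nonempty := hEne.image _
    have hmt_ge : m ≤ sInf ((fun z => f t z / π z) '' E) := by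
      apply le_csInf hmt_ne
      rintro b ⟨x, hx, rfl⟩
      exact hglb t ht x hx
    have hcm : cminus m ≤ cminus (sInf ((fun z => f t z / π z) '' E)) :=
      hcm_mono (mem_Ioi.mpr hm) (mem_Ioi.mpr (lt_of_lt_of_le hm hmt_ge)) hmt_ge
    have hΘlb : ∀ x ∈ E, ∀ y ∈ E, cminus m * π y ≤ Θ (f t) x y := by
      intro x hx y hy
      have h2 : cminus m ≤ Θ (f t) x y / π y :=
        le_trans hcm (hmonot (f t) (hft t ht) x hx y hy)
      rw [le_div_iff₀ (hπpos y hy)] at h2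
      exact h2
    have hK1 : ∀ x ∈ E, ∀ y ∈ E, 1 ≤ Θ (f t) y x * π y / (Θ (f t) x y * π x) →
        (cminus m * h 1) * (π x * π y)
          ≤ π x * Θ (f t) x y * h (Θ (f t) y x * π y / (Θ (f t) x y * π x)) := by
      intro x hx y hy h1a
      have hh1a : h 1 ≤ h (Θ (f t) y x * π y / (Θ (f t) x y * π x)) :=
        hmono (mem_Ici.mpr zero_le_one) (mem_Ici.mpr (le_trans zero_le_one h1a)) h1a
      have hlb := hΘlb x hx y hy
      have e2 : (cminus m * h 1) * (π x * π y) = (π x * (cminus m * π y)) * h 1 := by ring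
      rw [e2]
      apply mul_le_mul ?_ hh1a (hh0 1 zero_le_one) ?_
      · exact mul_le_mul_of_nonneg_left hlb (hπpos x hx).le
      · exact mul_nonneg (hπpos x hx).le (hQpos x hx y hy).le
    have hKlb_pt : ∀ x ∈ E, ∀ y ∈ E, (cminus m * h 1) * (π x * π y)
        ≤ π x * Θ (f t) x y * h (Θ (f t) y x * π y / (Θ (f t) x y * π x)) := by
      intro x hx y hy
      rcases le_or_gt 1 (Θ (f t) y x * π y / (Θ (f t) x y * π x)) with hge | hlt
      · exact hK1 x hx y hy hge
      · rw [hKsymm x hx y hy]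
        have hb : 1 ≤ Θ (f t) x y * π x / (Θ (f t) y x * π y) := by
          have h1' := mul_pos (hQpos x hx y hy) (hπpos x hx)
          have h2' := mul_pos (hQpos y hy x hx) (hπpos y hy)
          rw [div_lt_one h1'] at hlt
          rw [le_div_iff₀ h2']
          linarith
        have hfin := hK1 y hy x hx hb
        calc (cminus m * h 1) * (π x * π y)
            = (cminus m * h 1) * (π y * π x) := by ring
          _ ≤ _ := hfin
    have hprodint : ∀ F : EuclideanSpace ℝ (Fin d) × EuclideanSpace ℝ (Fin d) → ℝ,
        ContinuousOn F (E ×ˢ E) →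
        Integrable F ((volume.restrict E).prod (volume.restrict E)) := by
      intro F hF
      rw [Measure.prod_restrict]
      exact hF.integrableOn_compact (hE.prod hE)
    have hg1 : ContinuousOn (fun z : EuclideanSpace ℝ (Fin d) × EuclideanSpace ℝ (Fin d) =>
        f t z.1 / π z.1) (E ×ˢ E) :=
      hgc.comp continuous_fst.continuousOn (fun z hz => hz.1)
    have hg2 : ContinuousOn (fun z : EuclideanSpace ℝ (Fin d) × EuclideanSpace ℝ (Fin d) =>
        f t z.2 / π z.2) (E ×ˢ E) :=
      hgc.comp continuous_snd.continuousOn (fun z hz => hz.2)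
    have hπ1 : ContinuousOn (fun z : EuclideanSpace ℝ (Fin d) × EuclideanSpace ℝ (Fin d) =>
        π z.1) (E ×ˢ E) :=
      hπc.comp continuous_fst.continuousOn (fun z hz => hz.1)
    have hπ2 : ContinuousOn (fun z : EuclideanSpace ℝ (Fin d) × EuclideanSpace ℝ (Fin d) =>
        π z.2) (E ×ˢ E) :=
      hπc.comp continuous_snd.continuousOn (fun z hz => hz.2)
    have hQ2 : ContinuousOn (fun z : EuclideanSpace ℝ (Fin d) × EuclideanSpace ℝ (Fin d) =>
        Θ (f t) z.2 z.1) (E ×ˢ E) :=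
      hQc.comp continuous_swap.continuousOn (fun z hz => mk_mem_prod hz.2 hz.1)
    have hαc : ContinuousOn (fun z : EuclideanSpace ℝ (Fin d) × EuclideanSpace ℝ (Fin d) =>
        Θ (f t) z.2 z.1 * π z.2 / (Θ (f t) z.1 z.2 * π z.1)) (E ×ˢ E) := by
      apply ContinuousOn.div (hQ2.mul hπ2) (hQc.mul hπ1)
      intro z hz
      exact (mul_pos (hQpos z.1 hz.1 z.2 hz.2) (hπpos z.1 hz.1)).ne'
    have hhαc : ContinuousOn (fun z : EuclideanSpace ℝ (Fin d) × EuclideanSpace ℝ (Fin d) =>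
        h (Θ (f t) z.2 z.1 * π z.2 / (Θ (f t) z.1 z.2 * π z.1))) (E ×ˢ E) := by
      apply hcont.comp hαc
      intro z hz
      exact mem_Ici.mpr (div_nonneg
        (mul_nonneg (hQpos z.2 hz.2 z.1 hz.1).le (hπpos z.2 hz.2).le)
        (mul_nonneg (hQpos z.1 hz.1 z.2 hz.2).le (hπpos z.1 hz.1).le))
    have hKc : ContinuousOn (fun z : EuclideanSpace ℝ (Fin d) × EuclideanSpace ℝ (Fin d) =>
        π z.1 * Θ (f t) z.1 z.2 *
        h (Θ (f t) z.2 z.1 * π z.2 / (Θ (f t) z.1 z.2 * π z.1))) (E ×ˢ E) :=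
      (hπ1.mul hQc).mul hhαc
    have hI1 : Integrable (fun z : EuclideanSpace ℝ (Fin d) × EuclideanSpace ℝ (Fin d) =>
        2 * (f t z.1 / π z.1 - 1) * (π z.1 * Θ (f t) z.1 z.2 *
          h (Θ (f t) z.2 z.1 * π z.2 / (Θ (f t) z.1 z.2 * π z.1)) *
          (f t z.2 / π z.2 - f t z.1 / π z.1)))
        ((volume.restrict E).prod (volume.restrict E)) :=
      hprodint _ ((continuousOn_const.mul (hg1.sub continuousOn_const)).mul
        (hKc.mul (hg2.sub hg1)))
    have hI2 : Integrable (fun z : EuclideanSpace ℝ (Fin d) × EuclideanSpace ℝ (Fin d) =>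
        π z.1 * Θ (f t) z.1 z.2 *
          h (Θ (f t) z.2 z.1 * π z.2 / (Θ (f t) z.1 z.2 * π z.1)) *
          (f t z.2 / π z.2 - f t z.1 / π z.1) ^ 2)
        ((volume.restrict E).prod (volume.restrict E)) :=
      hprodint _ (hKc.mul ((hg2.sub hg1).pow 2))
    have hmemae : ∀ᵐ z : EuclideanSpace ℝ (Fin d) × EuclideanSpace ℝ (Fin d)
        ∂((volume.restrict E).prod (volume.restrict E)), z ∈ E ×ˢ E := by
      rw [Measure.prod_restrict]
      exact ae_restrict_mem (hEm.prod hEm)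
    have hKsym_ae : ∀ᵐ z : EuclideanSpace ℝ (Fin d) × EuclideanSpace ℝ (Fin d)
        ∂((volume.restrict E).prod (volume.restrict E)),
        π z.1 * Θ (f t) z.1 z.2 * h (Θ (f t) z.2 z.1 * π z.2 / (Θ (f t) z.1 z.2 * π z.1))
        = π z.2 * Θ (f t) z.2 z.1 *
            h (Θ (f t) z.1 z.2 * π z.1 / (Θ (f t) z.2 z.1 * π z.2)) := by
      filter_upwards [hmemae] with z hz
      exact hKsymm z.1 hz.1 z.2 hz.2
    have hKlb_ae : ∀ᵐ z : EuclideanSpace ℝ (Fin d) × EuclideanSpace ℝ (Fin d)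
        ∂((volume.restrict E).prod (volume.restrict E)),
        (cminus m * h 1) * (π z.1 * π z.2)
        ≤ π z.1 * Θ (f t) z.1 z.2 *
            h (Θ (f t) z.2 z.1 * π z.2 / (Θ (f t) z.1 z.2 * π z.1)) := by
      filter_upwards [hmemae] with z hz
      exact hKlb_pt z.1 hz.1 z.2 hz.2
    exact aux_dirichlet
      (K := fun x y => π x * Θ (f t) x y * h (Θ (f t) y x * π y / (Θ (f t) x y * π x)))
      (g := fun x => f t x / π x) (w := π) (c := cminus m * h 1)
      hI1 hI2 (hπc.integrableOn_compact hE) ((hπc.mul hgc).integrableOn_compact hE)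
      ((hπc.mul (hgc.pow 2)).integrableOn_compact hE) hKsym_ae hKlb_ae hπint (hmass t ht)
  have hkey := aux_gronwall
    (fun t => ∫ x in E, π x * (f t x / π x - 1) ^ 2)
    (fun t => ∫ x in E, 2 * (f t x / π x - 1) *
        ∫ y in E, π x * Θ (f t) x y * h (Θ (f t) y x * π y / (Θ (f t) x y * π x)) *
          (f t y / π y - f t x / π x))
    (2 * (cminus m * h 1))
    (fun t ht => hent t ht) (fun t ht => hbound t ht)
  intro t ht
  have hk := hkey t ht
  simp only [sq_abs]
  have hexp : Real.exp (-2 * cminus m * h 1 * t)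
      = Real.exp (-(2 * (cminus m * h 1)) * t) := by
    congr 1
    ring
  rw [hexp, mul_assoc]
  linarith
end

section
/- Assume the proposal distribution Θ satisfies the monotonicity assumption: there is a non-decreasing function c⁻ : (0,∞) → (0,1] such that for every continuous positive probability density f on E, inf_{x,y∈E} Θ_f(y|x)/π(y) ≥ c⁻(inf_{x∈E} f(x)/π(x)). Assume h(1) > 0. Let f be a solution of the nonlinear Metropolis evolution equation with initial condition f₀ a continuous positive probability density on E. Then for all t ≥ 0, ∫_E |f_t(x) − π(x)| dx ≤ C₀·exp(−λ·t), where λ := c⁻(inf_{x∈E} f₀(x)/π(x))·h(1) > 0 and C₀ := sqrt(∫_E |f₀(x) − π(x)|²/π(x) dx) depends only on f₀ and π. -/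
open MeasureTheory Set

set_option maxHeartbeats 2000000 in
/-- Under the monotonicity assumption on the proposal distribution
and with `h(1) > 0`, any solution `f` of the nonlinear Metropolis evolution equation
with continuous positive probability density initial condition `f₀` satisfies, for
all `t ≥ 0`, `∫_E |f_t − π| ≤ C₀ exp(−λ t)` where
`λ := c⁻(inf_E f₀/π)·h(1) > 0` and `C₀ := sqrt(∫_E |f₀ − π|²/π)`.
Here `Θ g x y` denotes `Θ_g(y|x)`. -/
theorem stmt_10 {d : ℕ} (E : Set (EuclideanSpace ℝ (Fin d))) (hE : IsCompact E)
    (hEne : E.Nonempty)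
    (π : EuclideanSpace ℝ (Fin d) → ℝ) (hπ : IsPosDensityOn E π)
    (h : ℝ → ℝ)
    (hcont : ContinuousOn h (Set.Ici 0))
    (hmono : MonotoneOn h (Set.Ici 0))
    (hrange : ∀ u ∈ Set.Ici (0 : ℝ), h u ∈ Set.Icc (0 : ℝ) 1)
    (hlip : ∃ L : NNReal, LipschitzOnWith L h (Set.Ici 0))
    (hsym : ∀ u : ℝ, 0 < u → u * h (1 / u) = h u)
    (hh1 : 0 < h 1)
    (Θ : (EuclideanSpace ℝ (Fin d) → ℝ) →
      EuclideanSpace ℝ (Fin d) → EuclideanSpace ℝ (Fin d) → ℝ)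
    (hΘ : ∀ g, IsPosDensityOn E g →
      ContinuousOn (fun p : EuclideanSpace ℝ (Fin d) × EuclideanSpace ℝ (Fin d) =>
        Θ g p.1 p.2) (E ×ˢ E) ∧
      (∀ x ∈ E, ∀ y ∈ E, 0 < Θ g x y) ∧
      (∀ x ∈ E, (∫ y in E, Θ g x y) = 1))
    (cminus : ℝ → ℝ)
    (hcm_mono : MonotoneOn cminus (Set.Ioi 0))
    (hcm_range : ∀ m : ℝ, 0 < m → cminus m ∈ Set.Ioc (0 : ℝ) 1)
    (hmonot : ∀ g, IsPosDensityOn E g → ∀ x ∈ E, ∀ y ∈ E,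
      cminus (sInf ((fun z => g z / π z) '' E)) ≤ Θ g x y / π y)
    (f : ℝ → EuclideanSpace ℝ (Fin d) → ℝ)
    (hfc : ContinuousOn (fun p : ℝ × EuclideanSpace ℝ (Fin d) => f p.1 p.2)
      (Set.Ici 0 ×ˢ E))
    (hft : ∀ t ∈ Set.Ici (0 : ℝ), IsPosDensityOn E (f t))
    (hderiv : ∀ t ∈ Set.Ici (0 : ℝ), ∀ x ∈ E,
      HasDerivWithinAt (fun s => f s x)
        (∫ y in E, π x * Θ (f t) x y *
          h (Θ (f t) y x * π y / (Θ (f t) x y * π x)) *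
          (f t y / π y - f t x / π x)) (Set.Ici 0) t)
    (hentropy : ∀ φ : ℝ → ℝ, ConvexOn ℝ Set.univ φ → ContDiff ℝ 1 φ →
      ∀ t ∈ Set.Ici (0 : ℝ),
      HasDerivWithinAt (fun s => ∫ x in E, π x * φ (f s x / π x))
        (∫ x in E, deriv φ (f t x / π x) *
          (∫ y in E, π x * Θ (f t) x y *
            h (Θ (f t) y x * π y / (Θ (f t) x y * π x)) *
            (f t y / π y - f t x / π x))) (Set.Ici 0) t) :
    0 < cminus (sInf ((fun x => f 0 x / π x) '' E)) * h 1 ∧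
    ∀ t ∈ Set.Ici (0 : ℝ),
      ∫ x in E, |f t x - π x|
        ≤ Real.sqrt (∫ x in E, |f 0 x - π x| ^ 2 / π x) *
            Real.exp (-(cminus (sInf ((fun x => f 0 x / π x) '' E)) * h 1) * t) := by
  obtain ⟨hπc, hπpos, hπint⟩ := hπ
  have hEm : MeasurableSet E := hE.isClosed.measurableSet
  have hπne : ∀ x ∈ E, π x ≠ 0 := fun x hx => (hπpos x hx).ne'
  set g : ℝ → EuclideanSpace ℝ (Fin d) → ℝ := fun s x => f s x / π x with hgdef
  set lam : ℝ := cminus (sInf ((fun x => f 0 x / π x) '' E)) * h 1 with hlamdef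
  set m : ℝ → ℝ := fun s => sInf (g s '' E) with hmdef
  have hlam' : lam = cminus (m 0) * h 1 := rfl
  -- slice continuity and positivity of g
  have hgc : ∀ s ∈ Ici (0:ℝ), ContinuousOn (g s) E := fun s hs =>
    ((hft s hs).1).div hπc hπne
  have hgpos : ∀ s ∈ Ici (0:ℝ), ∀ x ∈ E, 0 < g s x := fun s hs x hx =>
    div_pos ((hft s hs).2.1 x hx) (hπpos x hx)
  have hmmem : ∀ s ∈ Ici (0:ℝ), m s ∈ g s '' E := fun s hs =>
    (hE.image_of_continuousOn (hgc s hs)).sInf_mem (hEne.image _)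
  have hmpos : ∀ s ∈ Ici (0:ℝ), 0 < m s := by
    intro s hs
    obtain ⟨x, hx, hxe⟩ := hmmem s hs
    exact hxe ▸ hgpos s hs x hx
  have hmle : ∀ s ∈ Ici (0:ℝ), ∀ x ∈ E, m s ≤ g s x := fun s hs x hx =>
    csInf_le (hE.image_of_continuousOn (hgc s hs)).bddBelow (mem_image_of_mem _ hx)
  have hlampos : 0 < lam := by
    rw [hlam']
    exact mul_pos (hcm_range _ (hmpos 0 (mem_Ici.2 le_rfl))).1 hh1
  -- continuity of m on Ici 0, via Tietze extension
  have hmc : ∃ m' : ℝ → ℝ, Continuous m' ∧ ∀ s ∈ Ici (0:ℝ), m' s = m s := by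
    have hgjc : ContinuousOn (fun p : ℝ × EuclideanSpace ℝ (Fin d) => g p.1 p.2)
        (Ici 0 ×ˢ E) := by
      apply hfc.div
      · exact hπc.comp continuous_snd.continuousOn (fun p hp => hp.2)
      · exact fun p hp => hπne p.2 hp.2
    have hclosed : IsClosed ((Ici (0:ℝ)) ×ˢ E) := isClosed_Ici.prod hE.isClosed
    obtain ⟨q, hq⟩ := ContinuousMap.exists_restrict_eq (Y := ℝ) hclosed
      ⟨_, hgjc.restrict⟩
    have hqeq : ∀ p ∈ (Ici (0:ℝ)) ×ˢ E, q p = g p.1 p.2 := by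
      intro p hp
      exact congrFun (congrArg ContinuousMap.toFun hq) ⟨p, hp⟩
    refine ⟨fun s => sInf ((fun x => q (s, x)) '' E), ?_, ?_⟩
    · exact hE.continuous_sInf (by exact q.continuous)
    · intro s hs
      simp only [hmdef]
      congr 1
      exact image_congr fun x hx => hqeq (s, x) ⟨hs, hx⟩
  obtain ⟨m', hm'c, hm'm⟩ := hmc
  -- the minimum principle
  have hψc : Continuous fun r => Real.exp r * m' r := Real.continuous_exp.mul hm'c
  have hmp : ∀ t ∈ Ici (0:ℝ), m 0 ≤ m t := by
    have hlow : ∀ r ∈ Ici (0:ℝ), ∀ x ∈ E,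
        π x * (m r - g r x) ≤ ∫ y in E, π x * Θ (f r) x y *
          h (Θ (f r) y x * π y / (Θ (f r) x y * π x)) * (f r y / π y - f r x / π x) := by
      intro r hr x hx
      obtain ⟨Θc, Θpos, Θint⟩ := hΘ (f r) (hft r hr)
      have hΘxc : ContinuousOn (fun y => Θ (f r) x y) E :=
        Θc.comp (Continuous.prodMk_right x).continuousOn (fun y hy => ⟨hx, hy⟩)
      have hΘxc' : ContinuousOn (fun y => Θ (f r) y x) E :=
        Θc.comp (continuous_id.prodMk continuous_const).continuousOn
          (fun y hy => ⟨hy, hx⟩)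
      have hαc : ContinuousOn
          (fun y => Θ (f r) y x * π y / (Θ (f r) x y * π x)) E := by
        apply ContinuousOn.div (hΘxc'.mul hπc) (hΘxc.mul continuousOn_const)
        intro y hy
        exact (mul_pos (Θpos x hx y hy) (hπpos x hx)).ne'
      have hαnn : ∀ y ∈ E, 0 ≤ Θ (f r) y x * π y / (Θ (f r) x y * π x) := fun y hy =>
        (div_pos (mul_pos (Θpos y hy x hx) (hπpos y hy))
          (mul_pos (Θpos x hx y hy) (hπpos x hx))).le
      have hintR : IntegrableOn (fun y => π x * Θ (f r) x y *
          h (Θ (f r) y x * π y / (Θ (f r) x y * π x)) *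
          (f r y / π y - f r x / π x)) E := by
        apply ContinuousOn.integrableOn_compact hE
        exact ((continuousOn_const.mul hΘxc).mul
          (hcont.comp hαc (fun y hy => hαnn y hy))).mul
          ((hgc r hr).sub continuousOn_const)
      have hintL : IntegrableOn (fun y => π x * Θ (f r) x y * (m r - g r x)) E :=
        ((continuousOn_const.mul hΘxc).mul continuousOn_const).integrableOn_compact hE
      have hmono2 : (∫ y in E, π x * Θ (f r) x y * (m r - g r x))
          ≤ ∫ y in E, π x * Θ (f r) x y *
            h (Θ (f r) y x * π y / (Θ (f r) x y * π x)) *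
            (f r y / π y - f r x / π x) := by
        apply setIntegral_mono_on hintL hintR hEm
        intro y hy
        have e1 : f r y / π y - f r x / π x = g r y - g r x := rfl
        rw [e1]
        have hc : 0 ≤ π x * Θ (f r) x y := (mul_pos (hπpos x hx) (Θpos x hx y hy)).le
        have hh01 := hrange _ (mem_Ici.2 (hαnn y hy))
        have h1 : m r ≤ g r y := hmle r hr y hy
        have h2 : m r ≤ g r x := hmle r hr x hx
        rcases le_total (g r y) (g r x) with hcase | hcase
        · nlinarith [hh01.1, hh01.2, hc, mul_le_mul_of_nonneg_left
            (sub_le_sub_right h1 (g r x)) hc,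
            mul_nonneg (mul_nonneg hc (sub_nonneg.2 hh01.2))
              (sub_nonneg.2 hcase)]
        · nlinarith [hh01.1, hh01.2, hc,
            mul_nonneg (mul_nonneg hc hh01.1) (sub_nonneg.2 hcase),
            mul_nonpos_of_nonneg_of_nonpos hc (sub_nonpos.2 h2)]
      calc π x * (m r - g r x)
          = ∫ y in E, π x * Θ (f r) x y * (m r - g r x) := by
            rw [show (fun y => π x * Θ (f r) x y * (m r - g r x))
              = fun y => (π x * (m r - g r x)) * Θ (f r) x y from
              funext fun y => by ring, integral_const_mul, Θint x hx, mul_one]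
        _ ≤ _ := hmono2
    have key : ∀ s ∈ Ici (0:ℝ), ∀ x ∈ E,
        m 0 + (∫ r in (0:ℝ)..s, Real.exp r * m' r) ≤ Real.exp s * g s x := by
      intro s hs x hx
      have hFd : ∀ r ∈ Ici (0:ℝ), HasDerivWithinAt
          (fun r' => Real.exp r' * g r' x - ∫ u in (0:ℝ)..r', Real.exp u * m' u)
          (Real.exp r * g r x + Real.exp r * ((∫ y in E, π x * Θ (f r) x y *
            h (Θ (f r) y x * π y / (Θ (f r) x y * π x)) *
            (f r y / π y - f r x / π x)) / π x)
            - Real.exp r * m' r) (Ici 0) r := by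
        intro r hr
        have hu : HasDerivWithinAt (fun r' => g r' x)
            ((∫ y in E, π x * Θ (f r) x y *
              h (Θ (f r) y x * π y / (Θ (f r) x y * π x)) *
              (f r y / π y - f r x / π x)) / π x) (Ici 0) r :=
          (hderiv r hr x hx).div_const (π x)
        have h1 := (Real.hasDerivAt_exp r).hasDerivWithinAt.mul hu
        have h2 : HasDerivAt (fun r' => ∫ u in (0:ℝ)..r', Real.exp u * m' u)
            (Real.exp r * m' r) r :=
          intervalIntegral.integral_hasDerivAt_right
            (hψc.intervalIntegrable _ _)
            (hψc.stronglyMeasurableAtFilter _ _)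
            hψc.continuousAt
        exact h1.sub h2.hasDerivWithinAt
      have hmono3 : MonotoneOn
          (fun r' => Real.exp r' * g r' x - ∫ u in (0:ℝ)..r', Real.exp u * m' u)
          (Ici 0) := by
        apply monotoneOn_of_deriv_nonneg (convex_Ici 0)
        · intro r hr; exact (hFd r hr).continuousWithinAt
        · intro r hr; rw [interior_Ici] at hr
          exact ((hFd r (mem_Ici.2 (mem_Ioi.1 hr).le)).hasDerivAt
            (Ici_mem_nhds (mem_Ioi.1 hr))).differentiableAt.differentiableWithinAt
        · intro r hr; rw [interior_Ici] at hr
          rw [((hFd r (mem_Ici.2 (mem_Ioi.1 hr).le)).hasDerivAt (Ici_mem_nhds (mem_Ioi.1 hr))).deriv]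
          have hl := hlow r (mem_Ici.2 (mem_Ioi.1 hr).le) x hx
          have hep := (Real.exp_pos r).le
          have hd : m r - g r x ≤ (∫ y in E, π x * Θ (f r) x y *
              h (Θ (f r) y x * π y / (Θ (f r) x y * π x)) *
              (f r y / π y - f r x / π x)) / π x :=
            (le_div_iff₀ (hπpos x hx)).2
              (by linarith [hl, mul_comm (π x) (m r - g r x)])
          rw [hm'm r (mem_Ici.2 (mem_Ioi.1 hr).le)]
          nlinarith [mul_le_mul_of_nonneg_left hd hep]
      have h00 := hmono3 self_mem_Ici hs hs
      simp only [Real.exp_zero, one_mul, intervalIntegral.integral_same,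
        sub_zero] at h00
      linarith [h00, hmle 0 self_mem_Ici x hx]
    have hms : ∀ s ∈ Ici (0:ℝ),
        m 0 + (∫ r in (0:ℝ)..s, Real.exp r * m' r) ≤ Real.exp s * m s := by
      intro s hs
      have hdiv : (m 0 + (∫ r in (0:ℝ)..s, Real.exp r * m' r)) / Real.exp s
          ≤ m s := by
        rw [hmdef]
        apply le_csInf (hEne.image _)
        rintro b ⟨x, hx, rfl⟩
        rw [div_le_iff₀ (Real.exp_pos s)]
        linarith [key s hs x hx, mul_comm (g s x) (Real.exp s)]
      have := mul_le_mul_of_nonneg_right hdiv (Real.exp_pos s).le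
      rw [div_mul_cancel₀ _ (Real.exp_pos s).ne'] at this
      linarith [this, mul_comm (m s) (Real.exp s)]
    intro t ht
    obtain ⟨ts, hts, htsmin⟩ := isCompact_Icc.exists_isMinOn
      (nonempty_Icc.2 ht) hm'c.continuousOn
    have hts0 : ts ∈ Ici (0:ℝ) := mem_Ici.2 hts.1
    have h1 := hms ts hts0
    have hint : (∫ r in (0:ℝ)..ts, Real.exp r * m' ts)
        ≤ ∫ r in (0:ℝ)..ts, Real.exp r * m' r := by
      apply intervalIntegral.integral_mono_on hts.1
      · exact (Real.continuous_exp.mul continuous_const).intervalIntegrable _ _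
      · exact hψc.intervalIntegrable _ _
      · intro u hu
        have : m' ts ≤ m' u := htsmin ⟨hu.1, le_trans hu.2 hts.2⟩
        exact mul_le_mul_of_nonneg_left this (Real.exp_pos u).le
    have hint2 : (∫ r in (0:ℝ)..ts, Real.exp r * m' ts)
        = (Real.exp ts - 1) * m' ts := by
      rw [intervalIntegral.integral_mul_const, integral_exp, Real.exp_zero,
        mul_comm]
    have hmts : m' ts = m ts := hm'm ts hts0
    have hmt : m' t = m t := hm'm t ht
    have hminle : m' ts ≤ m' t := htsmin ⟨ht, le_rfl⟩
    rw [hmts] at hint hint2 hminle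
    rw [hmt] at hminle
    nlinarith [h1, hint, hint2, hminle]
  -- the convex function φ
  set φ : ℝ → ℝ := fun u => (u - 1)^2 with hφdef
  have hφconv : ConvexOn ℝ Set.univ φ := by
    have h1 : ConvexOn ℝ Set.univ fun x : ℝ => x ^ 2 := Even.convexOn_pow even_two
    have h2 := h1.translate_right (-1 : ℝ)
    simp only [preimage_univ] at h2
    have : φ = (fun x : ℝ => x ^ 2) ∘ fun z => (-1 : ℝ) + z := by
      funext u; simp [hφdef, Function.comp]; ring
    rw [this]; exact h2
  have hφcd : ContDiff ℝ 1 φ :=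
    (contDiff_id.sub contDiff_const).pow 2
  have hφ' : deriv φ = fun u => 2 * (u - 1) := by
    funext u
    have : HasDerivAt φ ((2:ℕ) * (u - 1) ^ (2-1) * 1) u :=
      ((hasDerivAt_id u).sub_const 1).pow 2
    simpa using this.deriv
  -- the dissipation estimate
  have hDle : ∀ t ∈ Ici (0:ℝ),
      (∫ x in E, deriv φ (f t x / π x) *
        (∫ y in E, π x * Θ (f t) x y *
          h (Θ (f t) y x * π y / (Θ (f t) x y * π x)) *
          (f t y / π y - f t x / π x)))
        ≤ -(2*lam) * (∫ x in E, π x * φ (f t x / π x)) := by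
    intro t ht
    obtain ⟨Θc, Θpos, Θint⟩ := hΘ (f t) (hft t ht)
    have hGc : ContinuousOn (g t) E := hgc t ht
    set P : Measure (EuclideanSpace ℝ (Fin d) × EuclideanSpace ℝ (Fin d)) :=
      (volume.restrict E).prod (volume.restrict E) with hPdef
    have prodInt : ∀ Ψ : EuclideanSpace ℝ (Fin d) × EuclideanSpace ℝ (Fin d) → ℝ,
        ContinuousOn Ψ (E ×ˢ E) → Integrable Ψ P := by
      intro Ψ hΨ
      rw [hPdef, Measure.prod_restrict]
      exact hΨ.integrableOn_compact (hE.prod hE)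
    have hPae : ∀ᵐ z ∂P, z ∈ E ×ˢ E := by
      rw [hPdef, Measure.prod_restrict]
      exact ae_restrict_mem (hEm.prod hEm)
    -- continuity helpers
    have hπf : ContinuousOn (fun p : _ × _ => π p.1) (E ×ˢ E) :=
      hπc.comp continuous_fst.continuousOn (fun p hp => hp.1)
    have hπs : ContinuousOn (fun p : _ × _ => π p.2) (E ×ˢ E) :=
      hπc.comp continuous_snd.continuousOn (fun p hp => hp.2)
    have hGf : ContinuousOn (fun p : _ × _ => g t p.1) (E ×ˢ E) :=
      hGc.comp continuous_fst.continuousOn (fun p hp => hp.1)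
    have hGs : ContinuousOn (fun p : _ × _ => g t p.2) (E ×ˢ E) :=
      hGc.comp continuous_snd.continuousOn (fun p hp => hp.2)
    have hΘswap : ContinuousOn (fun p : _ × _ => Θ (f t) p.2 p.1) (E ×ˢ E) :=
      Θc.comp continuous_swap.continuousOn (fun p hp => ⟨hp.2, hp.1⟩)
    have hαpos : ∀ p ∈ E ×ˢ E,
        0 < Θ (f t) p.2 p.1 * π p.2 / (Θ (f t) p.1 p.2 * π p.1) := fun p hp =>
      div_pos (mul_pos (Θpos _ hp.2 _ hp.1) (hπpos _ hp.2))
        (mul_pos (Θpos _ hp.1 _ hp.2) (hπpos _ hp.1))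
    have hαc : ContinuousOn (fun p : _ × _ =>
        Θ (f t) p.2 p.1 * π p.2 / (Θ (f t) p.1 p.2 * π p.1)) (E ×ˢ E) := by
      apply (hΘswap.mul hπs).div (Θc.mul hπf)
      intro p hp
      exact (mul_pos (Θpos _ hp.1 _ hp.2) (hπpos _ hp.1)).ne'
    set A : EuclideanSpace ℝ (Fin d) → EuclideanSpace ℝ (Fin d) → ℝ :=
      fun x y => π x * Θ (f t) x y *
        h (Θ (f t) y x * π y / (Θ (f t) x y * π x)) with hAdef
    have hKc : ContinuousOn (fun p : _ × _ => A p.1 p.2) (E ×ˢ E) := by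
      simp only [hAdef]
      exact (hπf.mul Θc).mul
        (hcont.comp hαc (fun p hp => mem_Ici.2 (hαpos p hp).le))
    have hAsym : ∀ x ∈ E, ∀ y ∈ E, A x y = A y x := by
      intro x hx y hy
      have ha : 0 < Θ (f t) x y * π x := mul_pos (Θpos x hx y hy) (hπpos x hx)
      have hb : 0 < Θ (f t) y x * π y := mul_pos (Θpos y hy x hx) (hπpos y hy)
      have hs1 := hsym (Θ (f t) y x * π y / (Θ (f t) x y * π x)) (div_pos hb ha)
      rw [one_div_div] at hs1
      simp only [hAdef]
      have h2 : (Θ (f t) x y * π x) *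
          h (Θ (f t) y x * π y / (Θ (f t) x y * π x))
          = (Θ (f t) y x * π y) *
            h (Θ (f t) x y * π x / (Θ (f t) y x * π y)) := by
        rw [← hs1]
        field_simp [(Θpos x hx y hy).ne', (hπpos x hx).ne']
        try ring
      calc π x * Θ (f t) x y * h (Θ (f t) y x * π y / (Θ (f t) x y * π x))
          = (Θ (f t) x y * π x) * h (Θ (f t) y x * π y / (Θ (f t) x y * π x)) := by
            ring
        _ = (Θ (f t) y x * π y) * h (Θ (f t) x y * π x / (Θ (f t) y x * π y)) := h2
        _ = π y * Θ (f t) y x * h (Θ (f t) x y * π x / (Θ (f t) y x * π y)) := by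
            ring
    -- lower bound on A
    have hcmle : cminus (m 0) ≤ cminus (m t) :=
      hcm_mono (mem_Ioi.2 (hmpos 0 self_mem_Ici)) (mem_Ioi.2 (hmpos t ht)) (hmp t ht)
    have hΘlb : ∀ x ∈ E, ∀ y ∈ E, cminus (m t) * π y ≤ Θ (f t) x y := by
      intro x hx y hy
      have h1 := hmonot (f t) (hft t ht) x hx y hy
      exact (le_div_iff₀ (hπpos y hy)).1 h1
    have hmain : ∀ x ∈ E, ∀ y ∈ E,
        1 ≤ Θ (f t) y x * π y / (Θ (f t) x y * π x) →
        lam * (π x * π y) ≤ A x y := by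
      intro x hx y hy hge
      have hαnn : (0:ℝ) ≤ Θ (f t) y x * π y / (Θ (f t) x y * π x) :=
        (hαpos (x, y) ⟨hx, hy⟩).le
      have hh1le : h 1 ≤ h (Θ (f t) y x * π y / (Θ (f t) x y * π x)) :=
        hmono (mem_Ici.2 zero_le_one) (mem_Ici.2 hαnn) hge
      simp only [hAdef]
      calc lam * (π x * π y)
          = (cminus (m 0) * π y) * (h 1 * π x) := by rw [hlam']; ring
        _ ≤ (cminus (m t) * π y) * (h 1 * π x) :=
            mul_le_mul_of_nonneg_right
              (mul_le_mul_of_nonneg_right hcmle (hπpos y hy).le)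
              (mul_nonneg hh1.le (hπpos x hx).le)
        _ ≤ Θ (f t) x y * (h 1 * π x) :=
            mul_le_mul_of_nonneg_right (hΘlb x hx y hy)
              (mul_nonneg hh1.le (hπpos x hx).le)
        _ = π x * Θ (f t) x y * h 1 := by ring
        _ ≤ π x * Θ (f t) x y *
            h (Θ (f t) y x * π y / (Θ (f t) x y * π x)) :=
            mul_le_mul_of_nonneg_left hh1le
              (mul_pos (hπpos x hx) (Θpos x hx y hy)).le
    have hKge : ∀ x ∈ E, ∀ y ∈ E, lam * (π x * π y) ≤ A x y := by
      intro x hx y hy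
      rcases le_total 1 (Θ (f t) y x * π y / (Θ (f t) x y * π x)) with hge | hle
      · exact hmain x hx y hy hge
      · have ha : 0 < Θ (f t) x y * π x := mul_pos (Θpos x hx y hy) (hπpos x hx)
        have hb : 0 < Θ (f t) y x * π y := mul_pos (Θpos y hy x hx) (hπpos y hy)
        have hge' : 1 ≤ Θ (f t) x y * π x / (Θ (f t) y x * π y) :=
          (one_le_div hb).2 ((div_le_one ha).1 hle)
        rw [hAsym x hx y hy]
        calc lam * (π x * π y) = lam * (π y * π x) := by ring
          _ ≤ A y x := hmain y hy x hx hge'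
    -- integrability of the main integrands
    have intF : Integrable (fun z : _ × _ =>
        2*(g t z.1 - 1) * (A z.1 z.2 * (g t z.2 - g t z.1))) P :=
      prodInt _ ((continuousOn_const.mul (hGf.sub continuousOn_const)).mul
        (hKc.mul (hGs.sub hGf)))
    have intF' : Integrable (fun z : _ × _ =>
        2*(g t z.2 - 1) * (A z.1 z.2 * (g t z.1 - g t z.2))) P :=
      prodInt _ ((continuousOn_const.mul (hGs.sub continuousOn_const)).mul
        (hKc.mul (hGf.sub hGs)))
    have intT2 : Integrable (fun z : _ × _ =>
        A z.1 z.2 * (g t z.2 - g t z.1)^2) P :=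
      prodInt _ (hKc.mul ((hGs.sub hGf).pow 2))
    have intT3 : Integrable (fun z : _ × _ =>
        π z.1 * π z.2 * (g t z.2 - g t z.1)^2) P :=
      prodInt _ ((hπf.mul hπs).mul ((hGs.sub hGf).pow 2))
    -- Step 1 : the derivative is the double integral
    have s1 : (∫ x in E, deriv φ (f t x / π x) *
        (∫ y in E, π x * Θ (f t) x y *
          h (Θ (f t) y x * π y / (Θ (f t) x y * π x)) *
          (f t y / π y - f t x / π x)))
        = ∫ z, 2*(g t z.1 - 1) * (A z.1 z.2 * (g t z.2 - g t z.1)) ∂P := by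
      rw [show (fun x => deriv φ (f t x / π x) *
          (∫ y in E, π x * Θ (f t) x y *
            h (Θ (f t) y x * π y / (Θ (f t) x y * π x)) *
            (f t y / π y - f t x / π x)))
          = fun x => ∫ y in E, 2*(g t x - 1) * (A x y * (g t y - g t x)) from
        funext fun x => by
          simp only [hφ']
          exact (integral_const_mul _ _).symm]
      exact integral_integral intF
    -- Step 2 : swap
    have s2 : (∫ z, 2*(g t z.1 - 1) * (A z.1 z.2 * (g t z.2 - g t z.1)) ∂P)
        = ∫ z, 2*(g t z.2 - 1) * (A z.1 z.2 * (g t z.1 - g t z.2)) ∂P := by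
      calc (∫ z, 2*(g t z.1 - 1) * (A z.1 z.2 * (g t z.2 - g t z.1)) ∂P)
          = ∫ z, 2*(g t z.swap.1 - 1) *
              (A z.swap.1 z.swap.2 * (g t z.swap.2 - g t z.swap.1)) ∂P :=
            (integral_prod_swap fun z =>
              2*(g t z.1 - 1) * (A z.1 z.2 * (g t z.2 - g t z.1))).symm
        _ = ∫ z, 2*(g t z.2 - 1) * (A z.1 z.2 * (g t z.1 - g t z.2)) ∂P := by
            apply integral_congr_ae
            filter_upwards [hPae] with z hz
            simp only [Prod.fst_swap, Prod.snd_swap]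
            rw [hAsym z.2 hz.2 z.1 hz.1]
    -- Step 3 : symmetrization
    have s3 : (∫ z, 2*(g t z.1 - 1) * (A z.1 z.2 * (g t z.2 - g t z.1)) ∂P)
        = - ∫ z, A z.1 z.2 * (g t z.2 - g t z.1)^2 ∂P := by
      have hadd : (∫ z, 2*(g t z.1 - 1) * (A z.1 z.2 * (g t z.2 - g t z.1)) ∂P)
          + (∫ z, 2*(g t z.2 - 1) * (A z.1 z.2 * (g t z.1 - g t z.2)) ∂P)
          = ∫ z, (2*(g t z.1 - 1) * (A z.1 z.2 * (g t z.2 - g t z.1))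
            + 2*(g t z.2 - 1) * (A z.1 z.2 * (g t z.1 - g t z.2))) ∂P :=
        (integral_add intF intF').symm
      have hring : (∫ z, (2*(g t z.1 - 1) * (A z.1 z.2 * (g t z.2 - g t z.1))
          + 2*(g t z.2 - 1) * (A z.1 z.2 * (g t z.1 - g t z.2))) ∂P)
          = ∫ z, (-2) * (A z.1 z.2 * (g t z.2 - g t z.1)^2) ∂P := by
        congr 1
        funext z
        ring
      rw [hring, integral_const_mul] at hadd
      rw [← s2] at hadd
      linarith [hadd]
    -- Step 4 : kernel lower bound
    have s4 : lam * (∫ z, π z.1 * π z.2 * (g t z.2 - g t z.1)^2 ∂P)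
        ≤ ∫ z, A z.1 z.2 * (g t z.2 - g t z.1)^2 ∂P := by
      rw [← integral_const_mul]
      apply integral_mono_ae (intT3.const_mul lam) intT2
      filter_upwards [hPae] with z hz
      nlinarith [mul_le_mul_of_nonneg_right (hKge z.1 hz.1 z.2 hz.2)
        (sq_nonneg (g t z.2 - g t z.1))]
    -- Step 5 : the product integral equals 2 * chi-square
    have intfE : IntegrableOn (f t) E := (hft t ht).1.integrableOn_compact hE
    have intπE : IntegrableOn π E := hπc.integrableOn_compact hE
    have hzero : (∫ x in E, π x * (g t x - 1)) = 0 := by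
      rw [setIntegral_congr_fun hEm (show EqOn (fun x => π x * (g t x - 1))
        (fun x => f t x - π x) E from fun x hx => by
          show π x * (f t x / π x - 1) = f t x - π x
          have hp := hπne x hx
          field_simp)]
      rw [integral_sub intfE intπE, (hft t ht).2.2, hπint]
      ring
    have s5 : (∫ z, π z.1 * π z.2 * (g t z.2 - g t z.1)^2 ∂P)
        = 2 * ∫ x in E, π x * (g t x - 1)^2 := by
      have ept : (fun z : _ × _ => π z.1 * π z.2 * (g t z.2 - g t z.1)^2)
          = fun z => (π z.1 * (π z.2 * (g t z.2 - 1)^2)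
            + (π z.1 * (g t z.1 - 1)^2) * π z.2)
            - 2 * ((π z.1 * (g t z.1 - 1)) * (π z.2 * (g t z.2 - 1))) := by
        funext z
        ring
      have intA1 : Integrable (fun z : _ × _ =>
          π z.1 * (π z.2 * (g t z.2 - 1)^2)) P :=
        prodInt _ (hπf.mul (hπs.mul ((hGs.sub continuousOn_const).pow 2)))
      have intA2 : Integrable (fun z : _ × _ =>
          (π z.1 * (g t z.1 - 1)^2) * π z.2) P :=
        prodInt _ ((hπf.mul ((hGf.sub continuousOn_const).pow 2)).mul hπs)
      have intA3 : Integrable (fun z : _ × _ =>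
          2 * ((π z.1 * (g t z.1 - 1)) * (π z.2 * (g t z.2 - 1)))) P :=
        prodInt _ (continuousOn_const.mul ((hπf.mul (hGf.sub continuousOn_const)).mul
          (hπs.mul (hGs.sub continuousOn_const))))
      have intA12 : Integrable (fun z : _ × _ =>
          π z.1 * (π z.2 * (g t z.2 - 1)^2)
            + (π z.1 * (g t z.1 - 1)^2) * π z.2) P := intA1.add intA2
      rw [ept, integral_sub intA12 intA3, integral_add intA1 intA2,
        integral_const_mul]
      have p1 := integral_prod_mul (μ := volume.restrict E) (ν := volume.restrict E)
        (fun x => π x) (fun y => π y * (g t y - 1)^2)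
      have p2 := integral_prod_mul (μ := volume.restrict E) (ν := volume.restrict E)
        (fun x => π x * (g t x - 1)^2) (fun y => π y)
      have p3 := integral_prod_mul (μ := volume.restrict E) (ν := volume.restrict E)
        (fun x => π x * (g t x - 1)) (fun y => π y * (g t y - 1))
      rw [hPdef, p1, p2, p3, hπint, hzero]
      ring
    have hVt1 : (∫ x in E, π x * φ (f t x / π x))
        = ∫ x in E, π x * (g t x - 1)^2 := by
      simp only [hφdef, hgdef]
    calc (∫ x in E, deriv φ (f t x / π x) *
        (∫ y in E, π x * Θ (f t) x y *
          h (Θ (f t) y x * π y / (Θ (f t) x y * π x)) *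
          (f t y / π y - f t x / π x)))
        = ∫ z, 2*(g t z.1 - 1) * (A z.1 z.2 * (g t z.2 - g t z.1)) ∂P := s1
      _ = - ∫ z, A z.1 z.2 * (g t z.2 - g t z.1)^2 ∂P := s3
      _ ≤ -(lam * (∫ z, π z.1 * π z.2 * (g t z.2 - g t z.1)^2 ∂P)) := neg_le_neg s4
      _ = -(2*lam) * (∫ x in E, π x * φ (f t x / π x)) := by
          rw [s5, hVt1]
          ring
  -- Gronwall
  have hV0 : ∀ t ∈ Ici (0:ℝ), 0 ≤ ∫ x in E, π x * φ (f t x / π x) := by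
    intro t ht
    apply setIntegral_nonneg hEm
    intro x hx
    exact mul_nonneg (hπpos x hx).le (sq_nonneg _)
  have hgron : ∀ t ∈ Ici (0:ℝ),
      (∫ x in E, π x * φ (f t x / π x))
        ≤ (∫ x in E, π x * φ (f 0 x / π x)) * Real.exp (-(2*lam) * t) := by
    have hexpd : ∀ s : ℝ, HasDerivAt (fun r => Real.exp (r * (2*lam)))
        (Real.exp (s * (2*lam)) * (2*lam)) s := fun s =>
      (hasDerivAt_mul_const (2*lam)).exp
    have hWd : ∀ s ∈ Ici (0:ℝ), HasDerivWithinAt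
        (fun r => (∫ x in E, π x * φ (f r x / π x)) * Real.exp (r * (2*lam)))
        ((∫ x in E, deriv φ (f s x / π x) *
          (∫ y in E, π x * Θ (f s) x y *
            h (Θ (f s) y x * π y / (Θ (f s) x y * π x)) *
            (f s y / π y - f s x / π x))) * Real.exp (s * (2*lam)) +
          (∫ x in E, π x * φ (f s x / π x)) * (Real.exp (s * (2*lam)) * (2*lam)))
        (Ici 0) s := fun s hs =>
      (hentropy φ hφconv hφcd s hs).mul (hexpd s).hasDerivWithinAt
    have hanti : AntitoneOn
        (fun r => (∫ x in E, π x * φ (f r x / π x)) * Real.exp (r * (2*lam)))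
        (Ici 0) := by
      apply antitoneOn_of_deriv_nonpos (convex_Ici 0)
      · intro s hs; exact (hWd s hs).continuousWithinAt
      · intro s hs
        rw [interior_Ici] at hs
        exact ((hWd s (mem_Ici.2 (mem_Ioi.1 hs).le)).hasDerivAt (Ici_mem_nhds (mem_Ioi.1 hs))).differentiableAt.differentiableWithinAt
      · intro s hs
        rw [interior_Ici] at hs
        rw [((hWd s (mem_Ici.2 (mem_Ioi.1 hs).le)).hasDerivAt (Ici_mem_nhds (mem_Ioi.1 hs))).deriv]
        have h1 := hDle s (mem_Ici.2 (mem_Ioi.1 hs).le)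
        have h2 := hV0 s (mem_Ici.2 (mem_Ioi.1 hs).le)
        have h3 := (Real.exp_pos (s*(2*lam))).le
        nlinarith [mul_le_mul_of_nonneg_right h1 h3]
    intro t ht
    have hW := hanti self_mem_Ici ht ht
    simp only [zero_mul, Real.exp_zero, mul_one] at hW
    have := mul_le_mul_of_nonneg_right hW (Real.exp_pos (-(2*lam)*t)).le
    calc (∫ x in E, π x * φ (f t x / π x))
        = ((∫ x in E, π x * φ (f t x / π x)) * Real.exp (t*(2*lam))) *
            Real.exp (-(2*lam)*t) := by
          rw [mul_assoc, ← Real.exp_add, show t*(2*lam) + -(2*lam)*t = 0 by ring,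
            Real.exp_zero, mul_one]
      _ ≤ (∫ x in E, π x * φ (f 0 x / π x)) * Real.exp (-(2*lam)*t) := this
  refine ⟨hlampos, ?_⟩
  intro t ht
  have hVt := hgron t ht
  have hGc : ContinuousOn (g t) E := hgc t ht
  have hIeq : (∫ x in E, |f t x - π x|) = ∫ x in E, π x * |g t x - 1| := by
    apply setIntegral_congr_fun hEm
    intro x hx
    have hp := hπpos x hx
    simp only [hgdef]
    rw [show π x * |f t x / π x - 1| = |π x| * |f t x / π x - 1| by
        rw [abs_of_pos hp], ← abs_mul]
    congr 1
    field_simp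
  set I : ℝ := ∫ x in E, π x * |g t x - 1| with hI
  have hInn : 0 ≤ I :=
    setIntegral_nonneg hEm fun x hx => mul_nonneg (hπpos x hx).le (abs_nonneg _)
  have intφ : IntegrableOn (fun x => π x * φ (f t x / π x)) E :=
    (hπc.mul (((hGc.sub continuousOn_const).pow 2))).integrableOn_compact hE
  have intabs : IntegrableOn (fun x => π x * |g t x - 1|) E :=
    (hπc.mul ((hGc.sub continuousOn_const).abs)).integrableOn_compact hE
  have intπ : IntegrableOn π E := hπc.integrableOn_compact hE
  have hcs : I^2 ≤ ∫ x in E, π x * φ (f t x / π x) := by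
    have h0 : 0 ≤ ∫ x in E, π x * (|g t x - 1| - I)^2 :=
      setIntegral_nonneg hEm fun x hx => mul_nonneg (hπpos x hx).le (sq_nonneg _)
    have hpt : EqOn (fun x => π x * (|g t x - 1| - I)^2)
        (fun x => π x * φ (f t x / π x) - 2*I*(π x * |g t x - 1|) + I^2 * π x) E := by
      intro x hx
      simp only [hφdef, hgdef]
      rw [← sq_abs (f t x / π x - 1)]
      ring
    rw [setIntegral_congr_fun hEm hpt] at h0
    have int1 : IntegrableOn
        (fun x => π x * φ (f t x / π x) - 2*I*(π x * |g t x - 1|)) E :=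
      intφ.sub (intabs.const_mul _)
    have int2 : IntegrableOn (fun x => I^2 * π x) E := intπ.const_mul _
    have int3 : IntegrableOn (fun x => 2*I*(π x * |g t x - 1|)) E :=
      intabs.const_mul _
    rw [integral_add int1 int2, integral_sub intφ int3, integral_const_mul,
      integral_const_mul, hπint] at h0
    simp only [← hI] at h0
    nlinarith [h0]
  have hIle : I ≤ Real.sqrt ((∫ x in E, π x * φ (f 0 x / π x)) * Real.exp (-(2*lam)*t)) :=
    Real.le_sqrt_of_sq_le (le_trans hcs hVt)
  have hV00 := hV0 0 self_mem_Ici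
  have hsqrt : Real.sqrt ((∫ x in E, π x * φ (f 0 x / π x)) * Real.exp (-(2*lam)*t))
      = Real.sqrt (∫ x in E, π x * φ (f 0 x / π x)) * Real.exp (-lam*t) := by
    rw [Real.sqrt_mul hV00, show Real.exp (-(2*lam)*t) = (Real.exp (-lam*t))^2 by
      rw [sq, ← Real.exp_add]; congr 1; ring, Real.sqrt_sq (Real.exp_pos _).le]
  have hint0 : (∫ x in E, π x * φ (f 0 x / π x)) = ∫ x in E, |f 0 x - π x| ^ 2 / π x := by
    apply setIntegral_congr_fun hEm
    intro x hx
    have hp := hπpos x hx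
    simp only [hφdef]
    rw [sq_abs]
    field_simp
  rw [hIeq, ← hint0]
  rw [hsqrt] at hIle
  exact hIle
end
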